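/- arXiv:1612.06954 — 8 statements merged into one kernel-verified Lean document; each statement's English description precedes it below -/
import Mathlib

section
/- Let G = (V ∪ V', E) be a 3-regular bipartite graph with |V| = |V'| = n (so |E| = 3n), and let λ be a positive integer. Let G* be the graph obtained from G by replacing each edge with a path through 2λ new internal vertices, alternating between the two sides so that G* is bipartite with parts V ∪ U and V' ∪ U', where U (resp. U') is the set of inserted vertices on the same side as V (resp. V'). For integers p, p' with 0 ≤ p, p' ≤ n, the number of independent sets I of G with |I ∩ V| = p and |I ∩ V'| = p' equals the number of independent sets I* of G* with |I* ∩ V| = p, |I* ∩ V'| = p', |I* ∩ U| = 3λp, and |I* ∩ U'| = 3λn − 3λp. -/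
/-- Adjacency relation of the graph `G*` obtained from the bipartite graph
with parts `V`, `V'` and adjacency relation `A` by replacing each edge
`e = (v, v')` with a path `v, u'₁, u₁, u'₂, u₂, …, u'_λ, u_λ, v'` through
`2λ` new vertices, where the `uᵢ` (encoded with `Bool` value `false`) lie
on the same side as `V` and the `u'ᵢ` (encoded `true`) on the same side
as `V'`. -/
def starAdj {V V' : Type*} (A : V → V' → Prop) (lam : ℕ)
    (w₁ w₂ : (V ⊕ V') ⊕ ({e : V × V' // A e.1 e.2} × Fin lam × Bool)) : Prop :=
  match w₁, w₂ with
  | .inl (.inl v), .inr ⟨e, i, true⟩ => e.val.1 = v ∧ (i : ℕ) = 0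
  | .inr ⟨e, i, true⟩, .inl (.inl v) => e.val.1 = v ∧ (i : ℕ) = 0
  | .inr ⟨e, i, false⟩, .inl (.inr v') => e.val.2 = v' ∧ (i : ℕ) = lam - 1
  | .inl (.inr v'), .inr ⟨e, i, false⟩ => e.val.2 = v' ∧ (i : ℕ) = lam - 1
  | .inr ⟨e, i, true⟩, .inr ⟨e', j, false⟩ =>
      e = e' ∧ ((i : ℕ) = j ∨ (i : ℕ) = (j : ℕ) + 1)
  | .inr ⟨e', j, false⟩, .inr ⟨e, i, true⟩ =>
      e = e' ∧ ((i : ℕ) = j ∨ (i : ℕ) = (j : ℕ) + 1)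
  | _, _ => False


section SubdivProofHelpers

attribute [local instance] Classical.propDecidable

/-- Split a subtype over a product with `Bool`. -/
private def boolSplit {α : Type*} (P : α × Bool → Prop) :
    {x : α × Bool // P x} ≃ {a // P (a, false)} ⊕ {a // P (a, true)} where
  toFun x := match x with
    | ⟨(a, false), h⟩ => Sum.inl ⟨a, h⟩
    | ⟨(a, true), h⟩ => Sum.inr ⟨a, h⟩
  invFun y := match y with
    | Sum.inl ⟨a, h⟩ => ⟨(a, false), h⟩
    | Sum.inr ⟨a, h⟩ => ⟨(a, true), h⟩
  left_inv := by rintro ⟨⟨a, (_|_)⟩, h⟩ <;> rfl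
  right_inv := by rintro (⟨a, h⟩ | ⟨a, h⟩) <;> rfl

/-- Split a subtype over a product into a sigma type. -/
private def prodSplit {α β : Type*} (P : α × β → Prop) :
    {x : α × β // P x} ≃ Σ a : α, {b // P (a, b)} where
  toFun x := ⟨x.val.1, ⟨x.val.2, x.prop⟩⟩
  invFun y := ⟨(y.1, y.2.val), y.2.prop⟩
  left_inv _ := rfl
  right_inv _ := rfl

private lemma card_prod_fin {α : Type*} [Finite α] (lam : ℕ) (P : α → Prop) :
    Nat.card {x : α × Fin lam // P x.1} = lam * Nat.card {a // P a} := by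
  have eqv : {x : α × Fin lam // P x.1} ≃ {a // P a} × Fin lam :=
    { toFun := fun x => (⟨x.val.1, x.prop⟩, x.val.2)
      invFun := fun y => ⟨(y.1.val, y.2), y.1.prop⟩
      left_inv := fun x => rfl
      right_inv := fun y => rfl }
  rw [Nat.card_congr eqv, Nat.card_prod, Nat.card_eq_fintype_card (α := Fin lam),
    Fintype.card_fin, mul_comm]

private lemma card_edges {V V' : Type*} [Fintype V] [Fintype V'] {A : V → V' → Prop}
    (hreg : ∀ v : V, Nat.card {v' // A v v'} = 3) (Q : V → Prop) :
    Nat.card {e : {e : V × V' // A e.1 e.2} // Q e.val.1} = 3 * Nat.card {v : V // Q v} := by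
  have eqv : {e : {e : V × V' // A e.1 e.2} // Q e.val.1} ≃
      Σ v : {v : V // Q v}, {v' : V' // A v.val v'} :=
    { toFun := fun e => ⟨⟨e.val.val.1, e.prop⟩, ⟨e.val.val.2, e.val.prop⟩⟩
      invFun := fun x => ⟨⟨(x.1.val, x.2.val), x.2.prop⟩, x.1.prop⟩
      left_inv := fun e => rfl
      right_inv := fun x => rfl }
  rw [Nat.card_congr eqv, Nat.card_eq_fintype_card, Fintype.card_sigma]
  have h3 : ∀ v : {v : V // Q v}, Fintype.card {v' : V' // A v.val v'} = 3 := fun v => by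
    rw [← Nat.card_eq_fintype_card]; exact hreg v.val
  rw [Finset.sum_congr rfl (fun v _ => h3 v), Finset.sum_const, smul_eq_mul,
    Finset.card_univ, ← Nat.card_eq_fintype_card, mul_comm]

private lemma all_of_card {α : Type*} [Fintype α] (P : α → Prop)
    (h : Nat.card {x // P x} = Fintype.card α) : ∀ x, P x := by
  intro x
  by_contra hx
  have hlt := Fintype.card_subtype_lt (p := P) hx
  rw [← Nat.card_eq_fintype_card (α := {x // P x})] at hlt
  omega

private lemma none_of_card {α : Type*} [Finite α] (P : α → Prop)
    (h : Nat.card {x // P x} = 0) : ∀ x, ¬ P x := by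
  intro x hx
  rw [Nat.card_eq_zero] at h
  rcases h with h | h
  · exact h.false ⟨x, hx⟩
  · exact absurd h (not_infinite_iff_finite.mpr inferInstance)

private lemma path_forced {lam : ℕ} (hlam : 0 < lam) (sel : Fin lam → Bool → Prop)
    (h1 : ∀ i : Fin lam, ¬(sel i true ∧ sel i false))
    (h2 : ∀ i j : Fin lam, (i : ℕ) = (j : ℕ) + 1 → ¬(sel i true ∧ sel j false))
    (hcard : Nat.card {x : Fin lam × Bool // sel x.1 x.2} = lam)
    (h0 : ¬ sel ⟨0, hlam⟩ true) :
    ∀ i : Fin lam, sel i false ∧ ¬ sel i true := by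
  classical
  have hinj : Function.Injective
      (fun x : {x : Fin lam × Bool // sel x.1 x.2} => x.val.1) := by
    rintro ⟨⟨i, b⟩, hx⟩ ⟨⟨j, c⟩, hy⟩ h
    simp only at h
    subst h
    have hbc : b = c := by
      by_contra hbc
      cases b <;> cases c
      · exact hbc rfl
      · exact h1 i ⟨hy, hx⟩
      · exact h1 i ⟨hx, hy⟩
      · exact hbc rfl
    subst hbc; rfl
  have hbij : Function.Bijective
      (fun x : {x : Fin lam × Bool // sel x.1 x.2} => x.val.1) := by
    rw [Nat.bijective_iff_injective_and_card]
    exact ⟨hinj, by rw [hcard, Nat.card_eq_fintype_card, Fintype.card_fin]⟩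
  have hex : ∀ i : Fin lam, sel i true ∨ sel i false := by
    intro i
    obtain ⟨⟨⟨j, b⟩, hx⟩, hj⟩ := hbij.2 i
    simp only at hj
    subst hj
    cases b
    · exact Or.inr hx
    · exact Or.inl hx
  have hnt : ∀ m : ℕ, ∀ h : m < lam, ¬ sel ⟨m, h⟩ true := by
    intro m
    induction m with
    | zero => intro h; exact h0
    | succ k ih =>
      intro h hsel
      have hk : k < lam := Nat.lt_of_succ_lt h
      have hnf : ¬ sel ⟨k, hk⟩ false := fun hf => h2 ⟨k + 1, h⟩ ⟨k, hk⟩ rfl ⟨hsel, hf⟩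
      exact ih hk ((hex ⟨k, hk⟩).resolve_right hnf)
  intro i
  have hnti : ¬ sel i true := by
    have := hnt i.val i.isLt
    simpa using this
  exact ⟨(hex i).resolve_left hnti, hnti⟩

private lemma natCard_sigma {ι : Type*} [Fintype ι] {α : ι → Type*} [∀ i, Finite (α i)] :
    Nat.card (Σ i, α i) = ∑ i, Nat.card (α i) := by
  letI : ∀ i, Fintype (α i) := fun i => Fintype.ofFinite _
  rw [Nat.card_eq_fintype_card, Fintype.card_sigma]
  exact Finset.sum_congr rfl fun i _ => (Nat.card_eq_fintype_card).symm

end SubdivProofHelpers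


section SubdivMain
attribute [local instance] Classical.propDecidable Classical.decPred Classical.decEq Classical.decRel Fintype.ofFinite

variable {V V' : Type*} [Fintype V] [Fintype V']

private noncomputable def extSet (A : V → V' → Prop) (lam : ℕ) (I : Finset (V ⊕ V')) :
    Finset ((V ⊕ V') ⊕ ({e : V × V' // A e.1 e.2} × Fin lam × Bool)) :=
  Finset.univ.filter fun w =>
    match w with
    | .inl x => x ∈ I
    | .inr (e, _, b) => if Sum.inl e.val.1 ∈ I then b = false else b = true

private lemma mem_extSet_inl {A : V → V' → Prop} {lam : ℕ} (I : Finset (V ⊕ V')) (x : V ⊕ V') :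
    Sum.inl x ∈ extSet A lam I ↔ x ∈ I := by
  simp [extSet]

private lemma mem_extSet_inr {A : V → V' → Prop} {lam : ℕ} (I : Finset (V ⊕ V'))
    (e : {e : V × V' // A e.1 e.2}) (i : Fin lam) (b : Bool) :
    Sum.inr (e, i, b) ∈ extSet A lam I ↔
      (if Sum.inl e.val.1 ∈ I then b = false else b = true) := by
  simp [extSet]



private lemma subdiv_forward {A : V → V' → Prop}
    {lam n p p' : ℕ} (hV : Fintype.card V = n)
    (hregV : ∀ v : V, Nat.card {v' : V' // A v v'} = 3)
    (hp : p ≤ n)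
    (I : Finset (V ⊕ V'))
    (hind : ∀ v v', A v v' → ¬(Sum.inl v ∈ I ∧ Sum.inr v' ∈ I))
    (hpI : Nat.card {v : V // Sum.inl v ∈ I} = p)
    (hp'I : Nat.card {v' : V' // Sum.inr v' ∈ I} = p') :
    (∀ w₁ w₂, starAdj A lam w₁ w₂ → ¬(w₁ ∈ extSet A lam I ∧ w₂ ∈ extSet A lam I)) ∧
      Nat.card {v : V // Sum.inl (Sum.inl v) ∈ extSet A lam I} = p ∧
      Nat.card {v' : V' // Sum.inl (Sum.inr v') ∈ extSet A lam I} = p' ∧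
      Nat.card {u : {e : V × V' // A e.1 e.2} × Fin lam //
          Sum.inr (u.1, u.2, false) ∈ extSet A lam I} = 3 * lam * p ∧
      Nat.card {u : {e : V × V' // A e.1 e.2} × Fin lam //
          Sum.inr (u.1, u.2, true) ∈ extSet A lam I} = 3 * lam * n - 3 * lam * p := by
  refine ⟨?_, ?_, ?_, ?_, ?_⟩
  · rintro (x₁ | ⟨e₁, i₁, b₁⟩) (x₂ | ⟨e₂, i₂, b₂⟩) hadj ⟨hm1, hm2⟩
    · cases x₁ <;> cases x₂ <;> simpa [starAdj] using hadj
    · rw [mem_extSet_inl] at hm1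
      rw [mem_extSet_inr] at hm2
      cases x₁ with
      | inl v =>
        cases b₂ with
        | false => simpa [starAdj] using hadj
        | true =>
          simp only [starAdj] at hadj
          rw [if_pos (by rw [hadj.1]; exact hm1)] at hm2
          simp at hm2
      | inr v' =>
        cases b₂ with
        | true => simpa [starAdj] using hadj
        | false =>
          simp only [starAdj] at hadj
          split at hm2
          · exact hind e₂.val.1 e₂.val.2 e₂.prop ⟨‹_›, by rw [hadj.1]; exact hm1⟩
          · simp at hm2
    · rw [mem_extSet_inr] at hm1
      rw [mem_extSet_inl] at hm2
      cases x₂ with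
      | inl v =>
        cases b₁ with
        | false => simpa [starAdj] using hadj
        | true =>
          simp only [starAdj] at hadj
          rw [if_pos (by rw [hadj.1]; exact hm2)] at hm1
          simp at hm1
      | inr v' =>
        cases b₁ with
        | true => simpa [starAdj] using hadj
        | false =>
          simp only [starAdj] at hadj
          split at hm1
          · exact hind e₁.val.1 e₁.val.2 e₁.prop ⟨‹_›, by rw [hadj.1]; exact hm2⟩
          · simp at hm1
    · rw [mem_extSet_inr] at hm1 hm2
      cases b₁ <;> cases b₂
      · simpa [starAdj] using hadj
      · simp only [starAdj] at hadj
        obtain ⟨hee, -⟩ := hadj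
        subst hee
        split at hm1 <;> split at hm2 <;> simp_all
      · simp only [starAdj] at hadj
        obtain ⟨hee, -⟩ := hadj
        subst hee
        split at hm1 <;> split at hm2 <;> simp_all
      · simpa [starAdj] using hadj
  · rw [Nat.card_congr (Equiv.subtypeEquivRight (fun v : V => mem_extSet_inl I (Sum.inl v)))]
    exact hpI
  · rw [Nat.card_congr (Equiv.subtypeEquivRight (fun v' : V' => mem_extSet_inl I (Sum.inr v')))]
    exact hp'I
  · have hiff : ∀ u : {e : V × V' // A e.1 e.2} × Fin lam,
        (Sum.inr (u.1, u.2, false) ∈ extSet A lam I ↔ Sum.inl u.1.val.1 ∈ I) := by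
      intro u
      rw [mem_extSet_inr]
      split <;> simp_all
    rw [Nat.card_congr (Equiv.subtypeEquivRight hiff),
      card_prod_fin lam (fun e : {e : V × V' // A e.1 e.2} => Sum.inl e.val.1 ∈ I),
      card_edges hregV (fun v : V => Sum.inl v ∈ I), hpI]
    ring
  · have hiff : ∀ u : {e : V × V' // A e.1 e.2} × Fin lam,
        (Sum.inr (u.1, u.2, true) ∈ extSet A lam I ↔ ¬ Sum.inl u.1.val.1 ∈ I) := by
      intro u
      rw [mem_extSet_inr]
      split <;> simp_all
    rw [Nat.card_congr (Equiv.subtypeEquivRight hiff),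
      card_prod_fin lam (fun e : {e : V × V' // A e.1 e.2} => ¬ Sum.inl e.val.1 ∈ I),
      card_edges hregV (fun v : V => ¬ Sum.inl v ∈ I)]
    have hcompl : Nat.card {v : V // ¬ Sum.inl v ∈ I} = n - p := by
      have h1 : Fintype.card {v : V // ¬ Sum.inl v ∈ I}
          = Fintype.card V - Fintype.card {v : V // Sum.inl v ∈ I} :=
        Fintype.card_subtype_compl _
      rw [Nat.card_eq_fintype_card, h1, hV, ← Nat.card_eq_fintype_card, hpI]
    rw [hcompl]
    obtain ⟨k, hk⟩ := Nat.le.dest hp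
    subst hk
    rw [Nat.add_sub_cancel_left, Nat.mul_add, Nat.add_sub_cancel_left]
    ring


private lemma subdiv_backward {A : V → V' → Prop}
    {lam n p p' : ℕ} (hlam : 0 < lam) (hV : Fintype.card V = n)
    (hregV : ∀ v : V, Nat.card {v' : V' // A v v'} = 3)
    (hp : p ≤ n)
    (J : Finset ((V ⊕ V') ⊕ ({e : V × V' // A e.1 e.2} × Fin lam × Bool)))
    (hJind : ∀ w₁ w₂, starAdj A lam w₁ w₂ → ¬(w₁ ∈ J ∧ w₂ ∈ J))
    (hJp : Nat.card {v : V // Sum.inl (Sum.inl v) ∈ J} = p)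
    (hJp' : Nat.card {v' : V' // Sum.inl (Sum.inr v') ∈ J} = p')
    (hJf : Nat.card {u : {e : V × V' // A e.1 e.2} × Fin lam //
        Sum.inr (u.1, u.2, false) ∈ J} = 3 * lam * p)
    (hJt : Nat.card {u : {e : V × V' // A e.1 e.2} × Fin lam //
        Sum.inr (u.1, u.2, true) ∈ J} = 3 * lam * n - 3 * lam * p) :
    ∃ I : Finset (V ⊕ V'),
      (∀ v v', A v v' → ¬(Sum.inl v ∈ I ∧ Sum.inr v' ∈ I)) ∧
      Nat.card {v : V // Sum.inl v ∈ I} = p ∧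
      Nat.card {v' : V' // Sum.inr v' ∈ I} = p' ∧
      extSet A lam I = J := by
  set I : Finset (V ⊕ V') := Finset.univ.filter (fun x => Sum.inl x ∈ J) with hIdef
  have hmemI : ∀ x : V ⊕ V', x ∈ I ↔ Sum.inl x ∈ J := fun x => by simp [hIdef]
  have hpair1 : ∀ (e : {e : V × V' // A e.1 e.2}) (i : Fin lam),
      ¬(Sum.inr (e, i, true) ∈ J ∧ Sum.inr (e, i, false) ∈ J) :=
    fun e i => hJind _ _ (show starAdj A lam (Sum.inr (e, i, true)) (Sum.inr (e, i, false))
      from ⟨rfl, Or.inl rfl⟩)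
  have hpair2 : ∀ (e : {e : V × V' // A e.1 e.2}) (i j : Fin lam), (i : ℕ) = (j : ℕ) + 1 →
      ¬(Sum.inr (e, i, true) ∈ J ∧ Sum.inr (e, j, false) ∈ J) :=
    fun e i j hij => hJind _ _ (show starAdj A lam (Sum.inr (e, i, true)) (Sum.inr (e, j, false))
      from ⟨rfl, Or.inr hij⟩)
  have hsplit : ∀ e : {e : V × V' // A e.1 e.2},
      Nat.card {x : Fin lam × Bool // Sum.inr (e, x.1, x.2) ∈ J}
        = Nat.card {i : Fin lam // Sum.inr (e, i, false) ∈ J}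
          + Nat.card {i : Fin lam // Sum.inr (e, i, true) ∈ J} := by
    intro e
    rw [Nat.card_congr (boolSplit (fun x : Fin lam × Bool => Sum.inr (e, x.1, x.2) ∈ J)),
      Nat.card_sum]
  have hle : ∀ e : {e : V × V' // A e.1 e.2},
      Nat.card {x : Fin lam × Bool // Sum.inr (e, x.1, x.2) ∈ J} ≤ lam := by
    intro e
    have hinj : Function.Injective
        (fun x : {x : Fin lam × Bool // Sum.inr (e, x.1, x.2) ∈ J} => x.val.1) := by
      rintro ⟨⟨i, b⟩, hx⟩ ⟨⟨j, c⟩, hy⟩ h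
      simp only at h
      subst h
      have hbc : b = c := by
        by_contra hbc
        cases b <;> cases c
        · exact hbc rfl
        · exact hpair1 e i ⟨hy, hx⟩
        · exact hpair1 e i ⟨hx, hy⟩
        · exact hbc rfl
      subst hbc; rfl
    have := Nat.card_le_card_of_injective _ hinj
    simpa using this
  have hsumf : ∑ e : {e : V × V' // A e.1 e.2},
      Nat.card {i : Fin lam // Sum.inr (e, i, false) ∈ J} = 3 * lam * p := by
    have h1 : Nat.card {u : {e : V × V' // A e.1 e.2} × Fin lam //
          Sum.inr (u.1, u.2, false) ∈ J}
        = ∑ e : {e : V × V' // A e.1 e.2},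
            Nat.card {i : Fin lam // Sum.inr (e, i, false) ∈ J} := by
      rw [Nat.card_congr (prodSplit (fun u : {e : V × V' // A e.1 e.2} × Fin lam =>
        Sum.inr (u.1, u.2, false) ∈ J)), natCard_sigma]
    rw [← h1, hJf]
  have hsumt : ∑ e : {e : V × V' // A e.1 e.2},
      Nat.card {i : Fin lam // Sum.inr (e, i, true) ∈ J} = 3 * lam * n - 3 * lam * p := by
    have h1 : Nat.card {u : {e : V × V' // A e.1 e.2} × Fin lam //
          Sum.inr (u.1, u.2, true) ∈ J}
        = ∑ e : {e : V × V' // A e.1 e.2},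
            Nat.card {i : Fin lam // Sum.inr (e, i, true) ∈ J} := by
      rw [Nat.card_congr (prodSplit (fun u : {e : V × V' // A e.1 e.2} × Fin lam =>
        Sum.inr (u.1, u.2, true) ∈ J)), natCard_sigma]
    rw [← h1, hJt]
  have hcardE : Nat.card {e : V × V' // A e.1 e.2} = 3 * n := by
    calc Nat.card {e : V × V' // A e.1 e.2}
        = Nat.card {e : {e : V × V' // A e.1 e.2} // (fun _ : V => True) e.val.1} :=
          Nat.card_congr (Equiv.subtypeUnivEquiv (fun _ => trivial)).symm
      _ = 3 * Nat.card {v : V // (fun _ : V => True) v} := card_edges hregV (fun _ : V => True)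
      _ = 3 * n := by
          rw [Nat.card_congr (Equiv.subtypeUnivEquiv (fun _ : V => trivial)),
            Nat.card_eq_fintype_card, hV]
  have hsumg : ∑ e : {e : V × V' // A e.1 e.2},
      Nat.card {x : Fin lam × Bool // Sum.inr (e, x.1, x.2) ∈ J} = 3 * lam * n := by
    rw [Finset.sum_congr rfl (fun e _ => hsplit e), Finset.sum_add_distrib, hsumf, hsumt]
    have h3 : 3 * lam * p ≤ 3 * lam * n := Nat.mul_le_mul le_rfl hp
    omega
  have hglam : ∀ e : {e : V × V' // A e.1 e.2},
      Nat.card {x : Fin lam × Bool // Sum.inr (e, x.1, x.2) ∈ J} = lam := by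
    intro e
    by_contra hne
    have hlt : Nat.card {x : Fin lam × Bool // Sum.inr (e, x.1, x.2) ∈ J} < lam :=
      lt_of_le_of_ne (hle e) hne
    have hstrict := Finset.sum_lt_sum (s := Finset.univ)
      (f := fun e : {e : V × V' // A e.1 e.2} =>
        Nat.card {x : Fin lam × Bool // Sum.inr (e, x.1, x.2) ∈ J})
      (g := fun _ => lam) (fun i _ => hle i) ⟨e, Finset.mem_univ e, hlt⟩
    rw [hsumg, Finset.sum_const, smul_eq_mul, Finset.card_univ, ← Nat.card_eq_fintype_card, hcardE] at hstrict
    have heq : (3 * n) * lam = 3 * lam * n := by ring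
    omega
  have hforced : ∀ e : {e : V × V' // A e.1 e.2}, Sum.inl (Sum.inl e.val.1) ∈ J →
      ∀ i : Fin lam, Sum.inr (e, i, false) ∈ J ∧ ¬ Sum.inr (e, i, true) ∈ J := by
    intro e hv
    refine path_forced hlam (fun i b => Sum.inr (e, i, b) ∈ J) (hpair1 e) (hpair2 e)
      (hglam e) ?_
    intro h0
    exact hJind (Sum.inl (Sum.inl e.val.1)) (Sum.inr (e, ⟨0, hlam⟩, true))
      (show starAdj A lam _ _ from ⟨rfl, rfl⟩) ⟨hv, h0⟩
  have hffull : ∀ e : {e : V × V' // A e.1 e.2}, Sum.inl (Sum.inl e.val.1) ∈ J →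
      Nat.card {i : Fin lam // Sum.inr (e, i, false) ∈ J} = lam := by
    intro e hv
    rw [Nat.card_congr (Equiv.subtypeUnivEquiv (fun i => (hforced e hv i).1)),
      Nat.card_eq_fintype_card, Fintype.card_fin]
  have hIind : ∀ v v', A v v' → ¬(Sum.inl v ∈ I ∧ Sum.inr v' ∈ I) := by
    rintro v v' hA ⟨hv, hv'⟩
    rw [hmemI] at hv hv'
    have hf := (hforced ⟨(v, v'), hA⟩ hv ⟨lam - 1, by omega⟩).1
    exact hJind (Sum.inr (⟨(v, v'), hA⟩, ⟨lam - 1, by omega⟩, false)) (Sum.inl (Sum.inr v'))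
      (show starAdj A lam _ _ from ⟨rfl, rfl⟩) ⟨hf, hv'⟩
  have hQ3p : (Finset.univ.filter
      (fun e : {e : V × V' // A e.1 e.2} => Sum.inl (Sum.inl e.val.1) ∈ J)).card = 3 * p := by
    have h1 : Nat.card {e : {e : V × V' // A e.1 e.2} // Sum.inl (Sum.inl e.val.1) ∈ J}
        = (Finset.univ.filter
          (fun e : {e : V × V' // A e.1 e.2} => Sum.inl (Sum.inl e.val.1) ∈ J)).card := by
      rw [Nat.card_eq_fintype_card]
      exact Fintype.card_of_subtype _ (by simp)
    rw [← h1, card_edges hregV (fun v : V => Sum.inl (Sum.inl v) ∈ J), hJp]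
  have hzero : ∀ e : {e : V × V' // A e.1 e.2}, ¬ Sum.inl (Sum.inl e.val.1) ∈ J →
      Nat.card {i : Fin lam // Sum.inr (e, i, false) ∈ J} = 0 := by
    have hsum_split := Finset.sum_filter_add_sum_filter_not Finset.univ
      (fun e : {e : V × V' // A e.1 e.2} => Sum.inl (Sum.inl e.val.1) ∈ J)
      (fun e => Nat.card {i : Fin lam // Sum.inr (e, i, false) ∈ J})
    have hforcedsum : ∑ e ∈ Finset.univ.filter
        (fun e : {e : V × V' // A e.1 e.2} => Sum.inl (Sum.inl e.val.1) ∈ J),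
        Nat.card {i : Fin lam // Sum.inr (e, i, false) ∈ J} = 3 * p * lam := by
      rw [Finset.sum_congr rfl (fun e he => hffull e (Finset.mem_filter.mp he).2),
        Finset.sum_const, hQ3p, smul_eq_mul]
    have hrest : ∑ e ∈ Finset.univ.filter
        (fun e : {e : V × V' // A e.1 e.2} => ¬ Sum.inl (Sum.inl e.val.1) ∈ J),
        Nat.card {i : Fin lam // Sum.inr (e, i, false) ∈ J} = 0 := by
      have hring : 3 * p * lam = 3 * lam * p := by ring
      omega
    intro e he
    exact (Finset.sum_eq_zero_iff.mp hrest) e (Finset.mem_filter.mpr ⟨Finset.mem_univ e, he⟩)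
  have hnofalse : ∀ e : {e : V × V' // A e.1 e.2}, ¬ Sum.inl (Sum.inl e.val.1) ∈ J →
      ∀ i : Fin lam, ¬ Sum.inr (e, i, false) ∈ J :=
    fun e he => none_of_card _ (hzero e he)
  have halltrue : ∀ e : {e : V × V' // A e.1 e.2}, ¬ Sum.inl (Sum.inl e.val.1) ∈ J →
      ∀ i : Fin lam, Sum.inr (e, i, true) ∈ J := by
    intro e he
    have h1 := hsplit e
    have h2 := hglam e
    have h3 := hzero e he
    exact all_of_card _ (by rw [Fintype.card_fin]; omega)
  refine ⟨I, hIind, ?_, ?_, ?_⟩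
  · rw [Nat.card_congr (Equiv.subtypeEquivRight (fun v : V => hmemI (Sum.inl v)))]
    exact hJp
  · rw [Nat.card_congr (Equiv.subtypeEquivRight (fun v' : V' => hmemI (Sum.inr v')))]
    exact hJp'
  · ext w
    cases w with
    | inl x =>
      rw [mem_extSet_inl]
      exact hmemI x
    | inr y =>
      obtain ⟨e, i, b⟩ := y
      rw [mem_extSet_inr]
      by_cases hv : Sum.inl e.val.1 ∈ I
      · rw [if_pos hv]
        rw [hmemI] at hv
        cases b
        · simp [(hforced e hv i).1]
        · simp [(hforced e hv i).2]
      · rw [if_neg hv]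
        rw [hmemI] at hv
        cases b
        · simp [hnofalse e hv i]
        · simp [halltrue e hv i]


end SubdivMain

section SubdivFinal
attribute [local instance] Classical.propDecidable Classical.decPred Classical.decEq Classical.decRel Fintype.ofFinite

/-- Lemma (subdivision): the number of independent sets `I` of the 3-regular
bipartite graph `G` with `|I ∩ V| = p` and `|I ∩ V'| = p'` equals the number
of independent sets `I*` of `G*` with `|I* ∩ V| = p`, `|I* ∩ V'| = p'`,
`|I* ∩ U| = 3λp` and `|I* ∩ U'| = 3λn − 3λp`. -/
theorem subdivision_independent_set_count
    {V V' : Type*} [Fintype V] [Fintype V']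
    (n : ℕ) (hV : Fintype.card V = n) (hV' : Fintype.card V' = n)
    (A : V → V' → Prop)
    (hregV : ∀ v : V, Nat.card {v' : V' // A v v'} = 3)
    (hregV' : ∀ v' : V', Nat.card {v : V // A v v'} = 3)
    (lam : ℕ) (hlam : 0 < lam)
    (p p' : ℕ) (hp : p ≤ n) (hp' : p' ≤ n) :
    Nat.card {I : Finset (V ⊕ V') //
        (∀ v v', A v v' → ¬(Sum.inl v ∈ I ∧ Sum.inr v' ∈ I)) ∧
        Nat.card {v : V // Sum.inl v ∈ I} = p ∧
        Nat.card {v' : V' // Sum.inr v' ∈ I} = p'} =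
    Nat.card {I : Finset ((V ⊕ V') ⊕ ({e : V × V' // A e.1 e.2} × Fin lam × Bool)) //
        (∀ w₁ w₂, starAdj A lam w₁ w₂ → ¬(w₁ ∈ I ∧ w₂ ∈ I)) ∧
        Nat.card {v : V // Sum.inl (Sum.inl v) ∈ I} = p ∧
        Nat.card {v' : V' // Sum.inl (Sum.inr v') ∈ I} = p' ∧
        Nat.card {u : {e : V × V' // A e.1 e.2} × Fin lam //
            Sum.inr (u.1, u.2, false) ∈ I} = 3 * lam * p ∧
        Nat.card {u : {e : V × V' // A e.1 e.2} × Fin lam //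
            Sum.inr (u.1, u.2, true) ∈ I} = 3 * lam * n - 3 * lam * p} := by
  refine Nat.card_congr (Equiv.ofBijective
    (fun I => ⟨extSet A lam I.val,
      subdiv_forward hV hregV hp I.val I.prop.1 I.prop.2.1 I.prop.2.2⟩) ⟨?_, ?_⟩)
  · rintro ⟨I, hI⟩ ⟨I', hI'⟩ hII
    simp only [Subtype.mk.injEq] at hII
    refine Subtype.ext ?_
    ext x
    rw [← mem_extSet_inl (A := A) (lam := lam) I x, hII, mem_extSet_inl]
  · rintro ⟨J, hJind, hJp, hJp', hJf, hJt⟩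
    obtain ⟨I, hIind, hIp, hIp', hIJ⟩ :=
      subdiv_backward hlam hV hregV hp J hJind hJp hJp' hJf hJt
    exact ⟨⟨I, hIind, hIp, hIp'⟩, Subtype.ext hIJ⟩

end SubdivFinal
end

section
/- Given a finite set S = {a_1, …, a_n} of n distinct points in ℝ^d, there exists a set S_new = {â_1, …, â_n} of points in {1, 2, …, n}^d such that any two distinct points of S_new differ in every coordinate, and for all i, j: â_i dominates â_j if and only if a_i dominates a_j. -/
open Finset

/-- Regularization lemma: given `n` distinct points in `ℝ^d`, there is a
"regular" set of points `b 1, …, b n` with coordinates in `{1, …, n}`,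
pairwise distinct in every coordinate, preserving the dominance relation. -/
theorem regularization
    (d n : ℕ) (a : Fin n → (Fin d → ℝ)) (ha : Function.Injective a) :
    ∃ b : Fin n → (Fin d → ℕ),
      (∀ i k, 1 ≤ b i k ∧ b i k ≤ n) ∧
      (∀ i j k, i ≠ j → b i k ≠ b j k) ∧
      (∀ i j : Fin n, (∀ k, a j k ≤ a i k) ↔ (∀ k, b j k ≤ b i k)) := by
  classical
  set s : Fin n → ℝ := fun i => ∑ m, a i m with hs
  set key : Fin d → Fin n → Lex (ℝ × Lex (ℝ × ℕ)) :=
    fun k i => toLex (a i k, toLex (s i, (i : ℕ))) with hkey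
  have keyinj : ∀ k, Function.Injective (key k) := by
    intro k i j h
    have h2 : (i : ℕ) = (j : ℕ) := congrArg (fun p => (ofLex (ofLex p).2).2) h
    exact Fin.ext h2
  have key_le_fst : ∀ k (i j : Fin n), key k j ≤ key k i → a j k ≤ a i k := by
    intro k i j h
    rcases Prod.Lex.le_iff.1 h with h1 | ⟨h1, _⟩
    · exact le_of_lt h1
    · exact le_of_eq h1
  set b : Fin n → Fin d → ℕ :=
    fun i k => (univ.filter (fun j => key k j ≤ key k i)).card with hb
  have b_lt : ∀ k (i j : Fin n), key k j < key k i → b j k < b i k := by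
    intro k i j h
    apply Finset.card_lt_card
    constructor
    · intro m hm
      simp only [mem_filter, mem_univ, true_and] at hm ⊢
      exact hm.trans h.le
    · intro hsub
      have hi : i ∈ univ.filter (fun m => key k m ≤ key k i) := by simp
      have := hsub hi
      simp only [mem_filter, mem_univ, true_and] at this
      exact absurd this (not_le.2 h)
  have b_le_iff : ∀ k (i j : Fin n), b j k ≤ b i k ↔ key k j ≤ key k i := by
    intro k i j
    constructor
    · intro h
      by_contra hc
      have : key k i < key k j := lt_of_not_ge hc
      exact absurd h (not_le.2 (b_lt k j i this))
    · intro h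
      rcases eq_or_lt_of_le h with he | hl
      · rw [keyinj k he]
      · exact (b_lt k i j hl).le
  refine ⟨b, ?_, ?_, ?_⟩
  · intro i k
    constructor
    · have : i ∈ univ.filter (fun j => key k j ≤ key k i) := by simp
      exact Finset.card_pos.2 ⟨i, this⟩
    · calc (univ.filter (fun j => key k j ≤ key k i)).card
          ≤ (univ : Finset (Fin n)).card := Finset.card_filter_le _ _
        _ = n := by simp
  · intro i j k hij
    rcases lt_or_gt_of_ne (fun h => hij (keyinj k h)) with h | h
    · exact (b_lt k j i h).ne
    · exact (b_lt k i j h).ne'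
  · intro i j
    constructor
    · intro h k
      rcases eq_or_ne j i with rfl | hij
      · exact le_refl _
      · have hne : ∃ m, a j m ≠ a i m := by
          by_contra hc
          push_neg at hc
          exact hij (ha (funext hc))
        obtain ⟨m0, hm0⟩ := hne
        have hss : s j < s i := by
          apply Finset.sum_lt_sum (fun m _ => h m)
          exact ⟨m0, mem_univ m0, lt_of_le_of_ne (h m0) hm0⟩
        have hkk : key k j < key k i := by
          apply Prod.Lex.lt_iff.2
          rcases eq_or_lt_of_le (h k) with he | hl
          · exact Or.inr ⟨he, Prod.Lex.lt_iff.2 (Or.inl hss)⟩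
          · exact Or.inl hl
        exact ((b_le_iff k i j).2 hkk.le)
    · intro h k
      exact key_le_fst k i j ((b_le_iff k i j).1 (h k))
end

section
/- Let B = (b_1, …, b_d) be an orthogonal basis of ℝ^d and let l ∈ ℙ^{d−1} be a point of real projective space not lying in the projective cone PC_B of B. Then there exists a point x ∈ PC_B that is perpendicular to l, i.e., ang(l, x) = π/2. -/
open scoped RealInnerProductSpace

/-- The projective cone of a family `B` of vectors in `ℝ^d`: the image in
real projective space of the set of nonzero vectors expressible as a
nonnegative (or nonpositive) combination of the `B i`. -/
def projCone {d : ℕ} (B : Fin d → EuclideanSpace ℝ (Fin d)) :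
    Set (Projectivization ℝ (EuclideanSpace ℝ (Fin d))) :=
  {l | ∃ (v : EuclideanSpace ℝ (Fin d)) (hv : v ≠ 0),
        Projectivization.mk ℝ v hv = l ∧
        ((∃ β : Fin d → ℝ, (∀ i, 0 ≤ β i) ∧ v = ∑ i, β i • B i) ∨
         (∃ β : Fin d → ℝ, (∀ i, β i ≤ 0) ∧ v = ∑ i, β i • B i)) }

/-- The angle metric on real projective space: `ang l l' ∈ [0, π/2]` is the
angle between `l` and `l'` viewed as lines through the origin. -/
noncomputable def ang {d : ℕ}
    (l l' : Projectivization ℝ (EuclideanSpace ℝ (Fin d))) : ℝ :=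
  Real.arccos (|⟪l.rep, l'.rep⟫| / (‖l.rep‖ * ‖l'.rep‖))

/-- If `l ∈ ℙ^{d−1}` does not lie in the projective cone of an orthogonal
basis `B` of `ℝ^d`, then some point of the projective cone is perpendicular
to `l`. -/
theorem exists_perp_in_projCone
    {d : ℕ} (B : Fin d → EuclideanSpace ℝ (Fin d))
    (hBorth : ∀ i j, i ≠ j → ⟪B i, B j⟫ = 0) (hB0 : ∀ i, B i ≠ 0)
    (l : Projectivization ℝ (EuclideanSpace ℝ (Fin d)))
    (hl : l ∉ projCone B) :
    ∃ x ∈ projCone B, ang l x = Real.pi / 2 := by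
  simp only [projCone, ang, Set.mem_setOf_eq] at hl ⊢
  rcases Nat.eq_zero_or_pos d with hd | hd
  · subst hd
    have h0 : l.rep = 0 := Subsingleton.elim _ _
    exact absurd h0 l.rep_nonzero
  have : Nonempty (Fin d) := ⟨⟨0, hd⟩⟩
  have hc : ∀ (β : Fin d → ℝ) i, ⟪∑ j, β j • B j, B i⟫ = β i * ‖B i‖^2 := by
    intro β i
    rw [sum_inner, Finset.sum_eq_single i]
    · rw [real_inner_smul_left, real_inner_self_eq_norm_sq]
    · intro j _ hj; rw [real_inner_smul_left, hBorth j i hj, mul_zero]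
    · simp
  have li : LinearIndependent ℝ B :=
    linearIndependent_of_ne_zero_of_inner_eq_zero hB0 hBorth
  obtain ⟨β₀, hrep⟩ : ∃ β : Fin d → ℝ, l.rep = ∑ i, β i • B i := by
    let b := basisOfLinearIndependentOfCardEqFinrank li (by simp)
    have hb : ⇑b = B := coe_basisOfLinearIndependentOfCardEqFinrank li _
    refine ⟨b.repr l.rep, ?_⟩
    conv_lhs => rw [← b.sum_repr l.rep]
    simp [hb]
  set c : Fin d → ℝ := fun i => ⟪l.rep, B i⟫ with hcdef
  have hBn : ∀ i, (0:ℝ) < ‖B i‖^2 := fun i => pow_pos (norm_pos_iff.mpr (hB0 i)) 2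
  have hci : ∀ i, c i = β₀ i * ‖B i‖^2 := by
    intro i
    rw [hcdef]; dsimp only
    rw [hrep]; exact hc β₀ i
  have hpos : ∃ j, 0 < c j := by
    by_contra h; push_neg at h
    refine hl ⟨l.rep, l.rep_nonzero, l.mk_rep, Or.inr ⟨β₀, fun i => ?_, hrep⟩⟩
    have hi := h i; rw [hci i] at hi
    nlinarith [hBn i]
  have hneg : ∃ k, c k < 0 := by
    by_contra h; push_neg at h
    refine hl ⟨l.rep, l.rep_nonzero, l.mk_rep, Or.inl ⟨β₀, fun i => ?_, hrep⟩⟩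
    have hi := h i; rw [hci i] at hi
    nlinarith [hBn i]
  obtain ⟨j, hj⟩ := hpos
  obtain ⟨k, hk⟩ := hneg
  have hjk : j ≠ k := by rintro rfl; linarith
  set w : EuclideanSpace ℝ (Fin d) := (-c k) • B j + c j • B k with hwdef
  set β : Fin d → ℝ :=
    fun i => (if i = j then -c k else 0) + (if i = k then c j else 0) with hβdef
  have hsum : w = ∑ i, β i • B i := by
    rw [hβdef, hwdef]
    simp only [add_smul, ite_smul, zero_smul, Finset.sum_add_distrib,
      Finset.sum_ite_eq', Finset.mem_univ, if_true]
  have hβnonneg : ∀ i, 0 ≤ β i := by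
    intro i; rw [hβdef]; dsimp only
    have : (0:ℝ) ≤ -c k := by linarith
    have : (0:ℝ) ≤ c j := le_of_lt hj
    split_ifs <;> linarith
  have hw : w ≠ 0 := by
    intro h0
    have h1 : ⟪B j, w⟫ = (-c k) * ‖B j‖^2 := by
      rw [hwdef, inner_add_right, real_inner_smul_right, real_inner_smul_right,
        hBorth j k hjk, real_inner_self_eq_norm_sq, mul_zero, add_zero]
    rw [h0, inner_zero_right] at h1
    nlinarith [hBn j]
  have hinner : ⟪l.rep, w⟫ = 0 := by
    rw [hwdef, inner_add_right, real_inner_smul_right, real_inner_smul_right]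
    have h1 : ⟪l.rep, B j⟫ = c j := rfl
    have h2 : ⟪l.rep, B k⟫ = c k := rfl
    rw [h1, h2]; ring
  refine ⟨Projectivization.mk ℝ w hw, ⟨w, hw, rfl, Or.inl ⟨β, hβnonneg, hsum⟩⟩, ?_⟩
  obtain ⟨a, ha⟩ := (Projectivization.mk_eq_mk_iff ℝ _ _ _ hw).mp
    ((Projectivization.mk ℝ w hw).mk_rep)
  have hx : ⟪l.rep, (Projectivization.mk ℝ w hw).rep⟫ = 0 := by
    rw [← ha, Units.smul_def, real_inner_smul_right, hinner, mul_zero]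
  rw [hx]
  simp [Real.arccos_zero]
end

section
/- Let B be an orthogonal basis of ℝ^d, let x ∈ PC_B be a point of the projective cone of B, and let ε ∈ (0, π/2]. Then there exists y ∈ PC_B with ang(x, y) < ε such that the closed ball of radius ε/(3√d) around y in the ang-metric, {z ∈ ℙ^{d−1} : ang(z, y) ≤ ε/(3√d)}, is contained in PC_B. -/
open scoped RealInnerProductSpace

/-- Normalized version of the family `B`. -/
noncomputable def eb {d : ℕ} (B : Fin d → EuclideanSpace ℝ (Fin d)) (i : Fin d) :
    EuclideanSpace ℝ (Fin d) := ‖B i‖⁻¹ • B i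

lemma ang_aux {d : ℕ} (v w : EuclideanSpace ℝ (Fin d)) (hv : v ≠ 0) (hw : w ≠ 0)
    (x y : Projectivization ℝ (EuclideanSpace ℝ (Fin d)))
    (hx : Projectivization.mk ℝ v hv = x) (hy : Projectivization.mk ℝ w hw = y) :
    |⟪x.rep, y.rep⟫| / (‖x.rep‖ * ‖y.rep‖) = |⟪v, w⟫| / (‖v‖ * ‖w‖) := by
  obtain ⟨a, ha⟩ := (Projectivization.mk_eq_mk_iff ℝ x.rep v x.rep_nonzero hv).1
    (by rw [Projectivization.mk_rep, hx])
  obtain ⟨b, hb⟩ := (Projectivization.mk_eq_mk_iff ℝ y.rep w y.rep_nonzero hw).1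
    (by rw [Projectivization.mk_rep, hy])
  have ha' : x.rep = (a : ℝ) • v := by rw [← ha, Units.smul_def]
  have hb' : y.rep = (b : ℝ) • w := by rw [← hb, Units.smul_def]
  have ha0 : |(a : ℝ)| ≠ 0 := abs_ne_zero.2 a.ne_zero
  have hb0 : |(b : ℝ)| ≠ 0 := abs_ne_zero.2 b.ne_zero
  have hvn : ‖v‖ ≠ 0 := norm_ne_zero_iff.2 hv
  have hwn : ‖w‖ ≠ 0 := norm_ne_zero_iff.2 hw
  rw [ha', hb', real_inner_smul_left, real_inner_smul_right, norm_smul, norm_smul,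
    abs_mul, abs_mul]
  simp only [Real.norm_eq_abs]
  field_simp

lemma orth_eb {d : ℕ} (B : Fin d → EuclideanSpace ℝ (Fin d))
    (hBorth : ∀ i j, i ≠ j → ⟪B i, B j⟫ = 0) (hB0 : ∀ i, B i ≠ 0) :
    Orthonormal ℝ (eb B) := by
  rw [orthonormal_iff_ite]
  intro i j
  rcases eq_or_ne i j with rfl | hij
  · have h : ‖B i‖ ≠ 0 := norm_ne_zero_iff.2 (hB0 i)
    rw [if_pos rfl, eb, real_inner_smul_left, real_inner_smul_right,
      real_inner_self_eq_norm_sq]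
    field_simp
  · rw [if_neg hij, eb, eb, real_inner_smul_left, real_inner_smul_right, hBorth i j hij]
    ring

lemma mem_projCone_of_nonneg {d : ℕ} (hd : 0 < d) (B : Fin d → EuclideanSpace ℝ (Fin d))
    (hBorth : ∀ i j, i ≠ j → ⟪B i, B j⟫ = 0) (hB0 : ∀ i, B i ≠ 0)
    (p : EuclideanSpace ℝ (Fin d)) (hp : p ≠ 0)
    (h : ∀ i, 0 ≤ ⟪eb B i, p⟫) :
    Projectivization.mk ℝ p hp ∈ projCone B := by
  haveI : Nonempty (Fin d) := ⟨⟨0, hd⟩⟩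
  have hon : Orthonormal ℝ (eb B) := orth_eb B hBorth hB0
  have hcard : Fintype.card (Fin d) = Module.finrank ℝ (EuclideanSpace ℝ (Fin d)) := by
    simp
  let b := basisOfLinearIndependentOfCardEqFinrank hon.linearIndependent hcard
  have hb : ⇑b = eb B := coe_basisOfLinearIndependentOfCardEqFinrank _ _
  have hon' : Orthonormal ℝ b := by rwa [hb]
  let ob := b.toOrthonormalBasis hon'
  have hob : ⇑ob = eb B := by rw [Module.Basis.coe_toOrthonormalBasis, hb]
  have hexp : ∑ i, ⟪eb B i, p⟫ • eb B i = p := by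
    conv_lhs => rw [← hob]
    exact ob.sum_repr' p
  refine ⟨p, hp, rfl, Or.inl ⟨fun i => ⟪eb B i, p⟫ * ‖B i‖⁻¹,
    fun i => mul_nonneg (h i) (by positivity), ?_⟩⟩
  calc p = ∑ i, ⟪eb B i, p⟫ • eb B i := hexp.symm
    _ = ∑ i, (⟪eb B i, p⟫ * ‖B i‖⁻¹) • B i := by
        refine Finset.sum_congr rfl fun i _ => ?_
        rw [eb, ← smul_smul]

lemma trig_key {ε : ℝ} (hε0 : 0 < ε) (hε : ε ≤ Real.pi / 2) :
    Real.sqrt 2 * ε / 3 ≤ Real.sin (3 * ε / 4) := by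
  have hπ := Real.pi_pos
  have h1 : 2 / Real.pi * (3 * ε / 4) ≤ Real.sin (3 * ε / 4) :=
    Real.mul_le_sin (by linarith) (by linarith)
  have h2 : Real.sqrt 2 ≤ 1.415 := by
    rw [show (1.415 : ℝ) = Real.sqrt (1.415 ^ 2) from (Real.sqrt_sq (by norm_num)).symm]
    exact Real.sqrt_le_sqrt (by norm_num)
  have h3 : Real.pi ≤ 3.15 := Real.pi_lt_d2.le
  have h5 : (2 : ℝ) / 3.15 ≤ 2 / Real.pi := div_le_div_of_nonneg_left (by norm_num) hπ h3
  have h6 : Real.sqrt 2 * ε / 3 ≤ 2 / 3.15 * (3 * ε / 4) := by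
    have := mul_le_mul_of_nonneg_right h2 hε0.le
    linarith
  have h7 : 2 / 3.15 * (3 * ε / 4) ≤ 2 / Real.pi * (3 * ε / 4) :=
    mul_le_mul_of_nonneg_right h5 (by positivity)
  linarith

lemma arccos_anti {a b : ℝ} (h : a ≤ b) : Real.arccos b ≤ Real.arccos a := by
  simp only [Real.arccos_eq_pi_div_two_sub_arcsin]
  have := Real.monotone_arcsin h
  linarith

set_option maxHeartbeats 1000000 in
/-- For `x` in the projective cone of an orthogonal basis `B` and
`ε ∈ (0, π/2]`, there is `y` in the cone with `ang x y < ε` such that the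
closed `ang`-ball of radius `ε/(3√d)` around `y` is contained in the cone. -/
theorem projCone_contains_ball
    {d : ℕ} (B : Fin d → EuclideanSpace ℝ (Fin d))
    (hBorth : ∀ i j, i ≠ j → ⟪B i, B j⟫ = 0) (hB0 : ∀ i, B i ≠ 0)
    (x : Projectivization ℝ (EuclideanSpace ℝ (Fin d)))
    (hx : x ∈ projCone B) (ε : ℝ) (hε0 : 0 < ε) (hε : ε ≤ Real.pi / 2) :
    ∃ y ∈ projCone B, ang x y < ε ∧
      ∀ z : Projectivization ℝ (EuclideanSpace ℝ (Fin d)),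
        ang z y ≤ ε / (3 * Real.sqrt d) → z ∈ projCone B := by
  classical
  have hπ := Real.pi_pos
  obtain ⟨v0, hv0, hmk0, hcase⟩ := hx
  have hd : 0 < d := by
    rcases Nat.eq_zero_or_pos d with hd0 | h
    · exfalso; apply hv0; subst hd0; exact Subsingleton.elim _ _
    · exact h
  have hBn : ∀ i, ‖B i‖ ≠ 0 := fun i => norm_ne_zero_iff.2 (hB0 i)
  have hee : ∀ i j, ⟪eb B i, eb B j⟫ = if i = j then 1 else 0 :=
    orthonormal_iff_ite.1 (orth_eb B hBorth hB0)
  have heb1 : ∀ i, ‖eb B i‖ = 1 := (orth_eb B hBorth hB0).1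
  -- coordinates of a combination
  have hco : ∀ (β : Fin d → ℝ) (j : Fin d), ⟪eb B j, ∑ i, β i • B i⟫ = β j * ‖B j‖ := by
    intro β j
    rw [eb, real_inner_smul_left, inner_sum, Finset.sum_eq_single j]
    · rw [real_inner_smul_right, real_inner_self_eq_norm_sq]
      field_simp [hBn j]
    · intro i _ hij
      rw [real_inner_smul_right, hBorth j i (Ne.symm hij), mul_zero]
    · intro hj; exact absurd (Finset.mem_univ j) hj
  -- a representative of x with nonnegative coordinates
  obtain ⟨v, hvne, hmkv, hvco⟩ :
      ∃ (v : EuclideanSpace ℝ (Fin d)) (hv : v ≠ 0),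
        Projectivization.mk ℝ v hv = x ∧ ∀ i, 0 ≤ ⟪eb B i, v⟫ := by
    rcases hcase with ⟨β, hβ, rfl⟩ | ⟨β, hβ, rfl⟩
    · exact ⟨_, hv0, hmk0, fun i => by
        rw [hco β i]; exact mul_nonneg (hβ i) (norm_nonneg _)⟩
    · refine ⟨-(∑ i, β i • B i), neg_ne_zero.2 hv0, ?_, ?_⟩
      · rw [← hmk0, Projectivization.mk_eq_mk_iff]
        exact ⟨-1, by simp⟩
      · intro i
        rw [inner_neg_right, hco β i]
        have := mul_nonneg (neg_nonneg.2 (hβ i)) (norm_nonneg (B i))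
        linarith
  have hvpos : 0 < ‖v‖ := norm_pos_iff.2 hvne
  -- normalized representative
  set vh : EuclideanSpace ℝ (Fin d) := ‖v‖⁻¹ • v with hvh
  clear_value vh
  have hvh1 : ‖vh‖ = 1 := by rw [hvh]; exact norm_smul_inv_norm hvne
  have hvhco : ∀ i, 0 ≤ ⟪eb B i, vh⟫ := fun i => by
    rw [hvh, real_inner_smul_right]
    exact mul_nonneg (by positivity) (hvco i)
  -- the direction of the barycenter
  set sd : ℝ := Real.sqrt d with hsd
  clear_value sd
  have hsd1 : (1 : ℝ) ≤ sd := by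
    rw [hsd, show (1:ℝ) = Real.sqrt 1 from Real.sqrt_one.symm]
    exact Real.sqrt_le_sqrt (by exact_mod_cast hd)
  have hsd0 : 0 < sd := lt_of_lt_of_le one_pos hsd1
  set u0 : EuclideanSpace ℝ (Fin d) := ∑ i, eb B i with hu0
  clear_value u0
  have hu0j : ∀ j, ⟪eb B j, u0⟫ = 1 := by
    intro j
    rw [hu0, inner_sum]
    simp [hee]
  have hu0n : ‖u0‖ = sd := by
    have h2 : ‖u0‖ ^ 2 = d := by
      rw [← real_inner_self_eq_norm_sq]
      nth_rewrite 1 [hu0]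
      rw [sum_inner]
      simp [hu0j]
    rw [← Real.sqrt_sq (norm_nonneg u0), h2]
    exact hsd.symm
  set u : EuclideanSpace ℝ (Fin d) := sd⁻¹ • u0 with hu
  clear_value u
  have hun : ‖u‖ = 1 := by
    rw [hu, norm_smul, Real.norm_eq_abs, abs_of_pos (inv_pos.2 hsd0), hu0n]
    field_simp
  have huj : ∀ j, ⟪eb B j, u⟫ = sd⁻¹ := by
    intro j
    rw [hu, real_inner_smul_right, hu0j, mul_one]
  have hvu : 0 ≤ ⟪vh, u⟫ := by
    rw [hu, real_inner_smul_right]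
    refine mul_nonneg (by positivity) ?_
    rw [hu0, inner_sum]
    exact Finset.sum_nonneg fun i _ => by rw [real_inner_comm]; exact hvhco i
  have hvu1 : ⟪vh, u⟫ ≤ 1 := by
    calc ⟪vh, u⟫ ≤ ‖vh‖ * ‖u‖ := real_inner_le_norm _ _
      _ = 1 := by rw [hvh1, hun, mul_one]
  -- the angle δ and the perturbed vector w
  set δ : ℝ := 3 * ε / 4 with hδdef
  clear_value δ
  have hδ0 : 0 < δ := by rw [hδdef]; linarith
  have hδlt : δ < Real.pi / 2 := by rw [hδdef]; linarith
  set c : ℝ := Real.cos δ with hcdef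
  clear_value c
  set s : ℝ := Real.sin δ with hsdef
  clear_value s
  have hc0 : 0 < c := by rw [hcdef]; exact Real.cos_pos_of_mem_Ioo ⟨by linarith, hδlt⟩
  have hs0 : 0 < s := by rw [hsdef]; exact Real.sin_pos_of_pos_of_lt_pi hδ0 (by linarith)
  have hc1 : c ≤ 1 := by rw [hcdef]; exact Real.cos_le_one δ
  have hs1 : s ≤ 1 := by rw [hsdef]; exact Real.sin_le_one δ
  have pyth : s ^ 2 + c ^ 2 = 1 := by rw [hsdef, hcdef]; exact Real.sin_sq_add_cos_sq δ
  set w : EuclideanSpace ℝ (Fin d) := c • vh + s • u with hw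
  clear_value w
  have hwj : ∀ j, ⟪eb B j, w⟫ = c * ⟪eb B j, vh⟫ + s * sd⁻¹ := by
    intro j
    rw [hw, inner_add_right, real_inner_smul_right, real_inner_smul_right, huj]
  have hssd : 0 < s * sd⁻¹ := mul_pos hs0 (inv_pos.2 hsd0)
  have hwjpos : ∀ j, s * sd⁻¹ ≤ ⟪eb B j, w⟫ := by
    intro j
    rw [hwj j]
    have := mul_nonneg hc0.le (hvhco j)
    linarith
  have hwne : w ≠ 0 := by
    intro h0
    have h1 := hwjpos ⟨0, hd⟩
    rw [h0, inner_zero_right] at h1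
    linarith
  have hwpos : 0 < ‖w‖ := norm_pos_iff.2 hwne
  have hvw : ⟪vh, w⟫ = c + s * ⟪vh, u⟫ := by
    rw [hw, inner_add_right, real_inner_smul_right, real_inner_smul_right,
      real_inner_self_eq_norm_sq, hvh1]
    ring
  have hvwge : c ≤ ⟪vh, w⟫ := by
    rw [hvw]
    have := mul_nonneg hs0.le hvu
    linarith
  have hwsq : ‖w‖ ^ 2 = c ^ 2 + 2 * (c * s * ⟪vh, u⟫) + s ^ 2 := by
    have h1 : ‖w‖ ^ 2 = ‖c • vh‖ ^ 2 + 2 * ⟪c • vh, s • u⟫ + ‖s • u‖ ^ 2 := by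
      rw [hw]; exact norm_add_sq_real _ _
    rw [norm_smul, norm_smul, real_inner_smul_left, real_inner_smul_right, hvh1, hun,
      Real.norm_eq_abs, Real.norm_eq_abs, abs_of_pos hc0, abs_of_pos hs0] at h1
    rw [h1]; ring
  have hwle : ‖w‖ ≤ Real.sqrt 2 := by
    have h2 : ‖w‖ ^ 2 ≤ 2 := by
      have hcsnn : 0 ≤ c * s := mul_nonneg hc0.le hs0.le
      have hcsa : c * s * ⟪vh, u⟫ ≤ c * s * 1 := mul_le_mul_of_nonneg_left hvu1 hcsnn
      have hcs2 : 2 * (c * s) ≤ 1 := by nlinarith [sq_nonneg (c - s)]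
      rw [hwsq]
      nlinarith [hcsa, hcs2]
    calc ‖w‖ = Real.sqrt (‖w‖ ^ 2) := (Real.sqrt_sq (norm_nonneg w)).symm
      _ ≤ Real.sqrt 2 := Real.sqrt_le_sqrt h2
  -- the point y
  refine ⟨Projectivization.mk ℝ w hwne,
    mem_projCone_of_nonneg hd B hBorth hB0 w hwne (fun i => le_trans hssd.le (hwjpos i)),
    ?_, ?_⟩
  · -- ang x y < ε
    have hang1 : ang x (Projectivization.mk ℝ w hwne)
        = Real.arccos (|⟪v, w⟫| / (‖v‖ * ‖w‖)) := by
      unfold ang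
      rw [ang_aux v w hvne hwne x _ hmkv rfl]
    have hvwinner : ⟪v, w⟫ = ‖v‖ * ⟪vh, w⟫ := by
      rw [hvh, real_inner_smul_left]
      field_simp
    have hratio : |⟪v, w⟫| / (‖v‖ * ‖w‖) = ⟪vh, w⟫ / ‖w‖ := by
      rw [hvwinner, abs_mul, abs_of_pos hvpos,
        abs_of_pos (lt_of_lt_of_le hc0 hvwge), mul_div_mul_left _ _ hvpos.ne']
    have hkey : (c * ‖w‖) ^ 2 ≤ ⟪vh, w⟫ ^ 2 := by
      rw [hvw]
      have hexp : (c + s * ⟪vh, u⟫) ^ 2 - (c * ‖w‖) ^ 2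
          = 2 * c * s * ⟪vh, u⟫ * s ^ 2 + s ^ 2 * ⟪vh, u⟫ ^ 2 := by
        linear_combination (-(c ^ 2)) * hwsq + (-(c ^ 2 + 2 * c * s * ⟪vh, u⟫)) * pyth
      have h1 : 0 ≤ 2 * c * s * ⟪vh, u⟫ * s ^ 2 :=
        mul_nonneg (mul_nonneg (mul_nonneg (mul_nonneg (by norm_num) hc0.le) hs0.le) hvu)
          (sq_nonneg s)
      have h2 : 0 ≤ s ^ 2 * ⟪vh, u⟫ ^ 2 := mul_nonneg (sq_nonneg s) (sq_nonneg _)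
      linarith
    have hcw : c * ‖w‖ ≤ ⟪vh, w⟫ := by
      calc c * ‖w‖ = Real.sqrt ((c * ‖w‖) ^ 2) := (Real.sqrt_sq (by positivity)).symm
        _ ≤ Real.sqrt (⟪vh, w⟫ ^ 2) := Real.sqrt_le_sqrt hkey
        _ = ⟪vh, w⟫ := Real.sqrt_sq (le_trans hc0.le hvwge)
    have hcle : c ≤ ⟪vh, w⟫ / ‖w‖ := by
      rw [le_div_iff₀ hwpos]
      exact hcw
    have : ang x (Projectivization.mk ℝ w hwne) ≤ δ := by
      rw [hang1, hratio]
      calc Real.arccos (⟪vh, w⟫ / ‖w‖) ≤ Real.arccos c := arccos_anti hcle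
        _ = δ := by rw [hcdef]; exact Real.arccos_cos hδ0.le (by linarith)
    rw [hδdef] at this
    linarith
  · -- the ball around y is in the cone
    intro z hz
    set r : ℝ := ε / (3 * sd) with hr
    clear_value r
    have hr0 : 0 < r := by rw [hr]; exact div_pos hε0 (by linarith)
    have hrle : r ≤ ε / 3 := by
      rw [hr]
      exact div_le_div_of_nonneg_left hε0.le (by norm_num) (by linarith)
    have hrpi : r ≤ Real.pi := by linarith
    obtain ⟨q, hqne, hmkq, hqw⟩ :
        ∃ (q : EuclideanSpace ℝ (Fin d)) (hq : q ≠ 0),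
          Projectivization.mk ℝ q hq = z ∧ 0 ≤ ⟪q, w⟫ := by
      rcases le_or_gt 0 ⟪z.rep, w⟫ with h | h
      · exact ⟨z.rep, z.rep_nonzero, Projectivization.mk_rep z, h⟩
      · refine ⟨-z.rep, neg_ne_zero.2 z.rep_nonzero, ?_, ?_⟩
        · rw [← Projectivization.mk_rep z, Projectivization.mk_eq_mk_iff]
          exact ⟨-1, by simp⟩
        · rw [inner_neg_left]; linarith
    have hqpos : 0 < ‖q‖ := norm_pos_iff.2 hqne
    set s0 : ℝ := ⟪q, w⟫ / (‖q‖ * ‖w‖) with hs0def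
    clear_value s0
    have hzang : Real.arccos s0 ≤ r := by
      rw [hs0def]
      have h1 : ang z (Projectivization.mk ℝ w hwne)
          = Real.arccos (|⟪q, w⟫| / (‖q‖ * ‖w‖)) := by
        unfold ang
        rw [ang_aux q w hqne hwne z _ hmkq rfl]
      rw [h1, abs_of_nonneg hqw] at hz
      exact hz
    have hs0nonneg : 0 ≤ s0 := by rw [hs0def]; exact div_nonneg hqw (by positivity)
    have hs0le1 : s0 ≤ 1 := by
      rw [hs0def, div_le_one (by positivity)]
      exact le_trans (le_abs_self _) (abs_real_inner_le_norm _ _)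
    have hcosr : Real.cos r ≤ s0 := by
      have h2 : Real.cos r ≤ Real.cos (Real.arccos s0) :=
        Real.cos_le_cos_of_nonneg_of_le_pi (Real.arccos_nonneg _) hrpi hzang
      rwa [Real.cos_arccos (by linarith) hs0le1] at h2
    set p : EuclideanSpace ℝ (Fin d) := ‖q‖⁻¹ • q with hp
    clear_value p
    set wh : EuclideanSpace ℝ (Fin d) := ‖w‖⁻¹ • w with hwh
    clear_value wh
    have hp1 : ‖p‖ = 1 := by rw [hp]; exact norm_smul_inv_norm hqne
    have hwh1 : ‖wh‖ = 1 := by rw [hwh]; exact norm_smul_inv_norm hwne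
    have hpwh : ⟪p, wh⟫ = s0 := by
      rw [hp, hwh, real_inner_smul_left, real_inner_smul_right, hs0def]
      field_simp [hqpos.ne', hwpos.ne']
    have hdist2 : ‖p - wh‖ ^ 2 ≤ r ^ 2 := by
      have h3 : ‖p - wh‖ ^ 2 = ‖p‖ ^ 2 - 2 * ⟪p, wh⟫ + ‖wh‖ ^ 2 := norm_sub_sq_real p wh
      rw [hp1, hwh1, hpwh] at h3
      have h4 : 1 - r ^ 2 / 2 ≤ Real.cos r := Real.one_sub_sq_div_two_le_cos
      linarith [hcosr]
    have hdist : ‖p - wh‖ ≤ r := by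
      calc ‖p - wh‖ = Real.sqrt (‖p - wh‖ ^ 2) := (Real.sqrt_sq (norm_nonneg _)).symm
        _ ≤ Real.sqrt (r ^ 2) := Real.sqrt_le_sqrt hdist2
        _ = r := Real.sqrt_sq hr0.le
    -- lower bound on the coordinates of wh
    have htk : Real.sqrt 2 * ε / 3 ≤ s := by rw [hsdef, hδdef]; exact trig_key hε0 hε
    have hs2 : 0 < Real.sqrt 2 := by positivity
    have hewh : ∀ i, r ≤ ⟪eb B i, wh⟫ := by
      intro i
      have h5 : ⟪eb B i, wh⟫ = ‖w‖⁻¹ * ⟪eb B i, w⟫ := by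
        rw [hwh, real_inner_smul_right]
      have h6 : (Real.sqrt 2)⁻¹ ≤ ‖w‖⁻¹ := inv_anti₀ hwpos hwle
      have h7 : (Real.sqrt 2)⁻¹ * (s * sd⁻¹) ≤ ‖w‖⁻¹ * ⟪eb B i, w⟫ := by
        have := hwjpos i
        have h8 : (Real.sqrt 2)⁻¹ * (s * sd⁻¹) ≤ ‖w‖⁻¹ * (s * sd⁻¹) :=
          mul_le_mul_of_nonneg_right h6 hssd.le
        have h9 : ‖w‖⁻¹ * (s * sd⁻¹) ≤ ‖w‖⁻¹ * ⟪eb B i, w⟫ :=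
          mul_le_mul_of_nonneg_left this (by positivity)
        linarith
      have h10 : r ≤ (Real.sqrt 2)⁻¹ * (s * sd⁻¹) := by
        rw [hr, div_le_iff₀ (by linarith : (0:ℝ) < 3 * sd)]
        have h11 : (Real.sqrt 2)⁻¹ * (s * sd⁻¹) * (3 * sd) = 3 * s / Real.sqrt 2 := by
          field_simp
        rw [h11, le_div_iff₀ hs2]
        have : Real.sqrt 2 * ε / 3 * 3 ≤ s * 3 := mul_le_mul_of_nonneg_right htk (by norm_num)
        linarith
      rw [h5]
      linarith
    -- coordinates of p are nonnegative
    have hpco : ∀ i, 0 ≤ ⟪eb B i, p⟫ := by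
      intro i
      have h1 : ⟪eb B i, wh⟫ - ⟪eb B i, p⟫ = ⟪eb B i, wh - p⟫ := (inner_sub_right _ _ _).symm
      have h2 : ⟪eb B i, wh - p⟫ ≤ ‖wh - p‖ := by
        have := abs_real_inner_le_norm (eb B i) (wh - p)
        rw [heb1 i, one_mul] at this
        exact le_trans (le_abs_self _) this
      have h3 : ‖wh - p‖ = ‖p - wh‖ := norm_sub_rev _ _
      have h4 := hewh i
      linarith [hdist]
    have hpne : p ≠ 0 := by
      intro h0
      rw [h0, norm_zero] at hp1
      norm_num at hp1
    have hmkp : Projectivization.mk ℝ p hpne = z := by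
      rw [← hmkq, Projectivization.mk_eq_mk_iff]
      refine ⟨Units.mk0 ‖q‖⁻¹ (inv_ne_zero hqpos.ne'), ?_⟩
      rw [Units.smul_def, Units.val_mk0, hp]
    rw [← hmkp]
    exact mem_projCone_of_nonneg hd B hBorth hB0 p hpne hpco
end

section
/- Let a_1, …, a_n be points in ℝ^d sorted so that π(a_1) ≥ ⋯ ≥ π(a_n), with colors cl(a_k), and suppose that for indices i < j we have π(a_i)·π(a_j) > Λ_S, where Λ_S is the probability that a random realization (each a_k included independently with probability π(a_k)) contains an inter-color dominance. Then for every subset R ⊆ {a_1,…,a_{i−1}}, the set R ∪ {a_i, a_j} contains no inter-color dominance. -/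
open Classical

/-- A set of indexed points contains an inter-color dominance. -/
def HasICD {d n : ℕ} (pt : Fin n → (Fin d → ℝ)) (cl : Fin n → ℕ)
    (R : Finset (Fin n)) : Prop :=
  ∃ a ∈ R, ∃ b ∈ R, cl a ≠ cl b ∧ ∀ k, pt b k ≤ pt a k

lemma sum_pair_weight (n : ℕ) (π : Fin n → ℝ) (p q : Fin n) (hpq : p ≠ q) :
    ∑ R ∈ (Finset.univ : Finset (Fin n)).powerset,
      (if p ∈ R ∧ q ∈ R then (∏ k ∈ R, π k) * (∏ k ∈ Rᶜ, (1 - π k)) else 0)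
    = π p * π q := by
  have h := Finset.prod_add (f := π)
    (g := fun k => if k = p ∨ k = q then 0 else 1 - π k)
    (s := (Finset.univ : Finset (Fin n)))
  have hL : (∏ k ∈ (Finset.univ : Finset (Fin n)),
      (π k + if k = p ∨ k = q then 0 else 1 - π k)) = π p * π q := by
    have hsub : ({p, q} : Finset (Fin n)) ⊆ Finset.univ := Finset.subset_univ _
    rw [← Finset.prod_subset hsub (fun x _ hx => by
      simp only [Finset.mem_insert, Finset.mem_singleton] at hx
      push_neg at hx
      simp [hx.1, hx.2])]
    rw [Finset.prod_pair hpq]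
    simp [hpq]
  rw [hL] at h
  rw [h]
  apply Finset.sum_congr rfl
  intro t ht
  by_cases hmem : p ∈ t ∧ q ∈ t
  · rw [if_pos hmem]
    congr 1
    · rw [← Finset.compl_eq_univ_sdiff]
      apply Finset.prod_congr rfl
      intro x hx
      have hxp : x ≠ p := fun h' => by simp [h', hmem.1] at hx
      have hxq : x ≠ q := fun h' => by simp [h', hmem.2] at hx
      simp [hxp, hxq]
  · rw [if_neg hmem]
    push_neg at hmem
    rcases Classical.em (p ∈ t) with hp | hp
    · have hq := hmem hp
      have hqmem : q ∈ Finset.univ \ t := by simp [hq]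
      rw [Finset.prod_eq_zero hqmem (by simp)]
      ring
    · have hpmem : p ∈ Finset.univ \ t := by simp [hp]
      rw [Finset.prod_eq_zero hpmem (by simp)]
      ring

/-- If the points are sorted by nonincreasing existence probability and
`π(a_i)·π(a_j) > Λ_S` for some `i < j` (where `Λ_S` is the probability that
a realization contains an inter-color dominance), then for every subset
`R ⊆ {a_1, …, a_{i−1}}`, the set `R ∪ {a_i, a_j}` contains no inter-color
dominance. -/
theorem no_icd_of_large_probability
    (d n : ℕ) (pt : Fin n → (Fin d → ℝ)) (cl : Fin n → ℕ) (π : Fin n → ℝ)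
    (hπ0 : ∀ k, 0 ≤ π k) (hπ1 : ∀ k, π k ≤ 1)
    (hmono : ∀ i j : Fin n, i ≤ j → π j ≤ π i)
    (i j : Fin n) (hij : i < j)
    (hbig : (∑ R ∈ (Finset.univ : Finset (Fin n)).powerset,
        if HasICD pt cl R then (∏ k ∈ R, π k) * (∏ k ∈ Rᶜ, (1 - π k)) else 0)
      < π i * π j) :
    ∀ R : Finset (Fin n), (∀ t ∈ R, t < i) →
      ¬ HasICD pt cl (insert i (insert j R)) := by
  intro R hR hICD
  obtain ⟨a, ha, b, hb, hcl, hdom⟩ := hICD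
  have hab : a ≠ b := fun h => hcl (by rw [h])
  -- membership characterization
  have hchar : ∀ x ∈ insert i (insert j R), x = i ∨ x = j ∨ x < i := by
    intro x hx
    simp only [Finset.mem_insert] at hx
    rcases hx with h | h | h
    · exact Or.inl h
    · exact Or.inr (Or.inl h)
    · exact Or.inr (Or.inr (hR x h))
  have hale : ∀ x ∈ insert i (insert j R), x ≤ j := by
    intro x hx
    rcases hchar x hx with h | h | h
    · exact le_of_lt (h ▸ hij)
    · exact le_of_eq h
    · exact le_of_lt (lt_trans h hij)
  -- π a * π b ≥ π i * π j
  have hprod : π i * π j ≤ π a * π b := by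
    rcases hchar a ha with h | h | h
    · -- a = i, so a ≤ i, b ≤ j
      exact mul_le_mul (hmono a i (le_of_eq h)) (hmono b j (hale b hb))
        (hπ0 j) (hπ0 a)
    · -- a = j; then b ≠ j so b ≤ i
      have hbi : b ≤ i := by
        rcases hchar b hb with h' | h' | h'
        · exact le_of_eq h'
        · exact absurd (h.trans h'.symm) hab
        · exact le_of_lt h'
      rw [mul_comm (π a) (π b)]
      exact mul_le_mul (hmono b i hbi) (hmono a j (le_of_eq h)) (hπ0 j) (hπ0 b)
    · exact mul_le_mul (hmono a i (le_of_lt h)) (hmono b j (hale b hb))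
        (hπ0 j) (hπ0 a)
  -- Λ ≥ sum over sets containing {a, b}
  have hsum : ∑ T ∈ (Finset.univ : Finset (Fin n)).powerset,
      (if a ∈ T ∧ b ∈ T then (∏ k ∈ T, π k) * (∏ k ∈ Tᶜ, (1 - π k)) else 0)
      ≤ ∑ T ∈ (Finset.univ : Finset (Fin n)).powerset,
      (if HasICD pt cl T then (∏ k ∈ T, π k) * (∏ k ∈ Tᶜ, (1 - π k)) else 0) := by
    apply Finset.sum_le_sum
    intro T _
    have hw : 0 ≤ (∏ k ∈ T, π k) * (∏ k ∈ Tᶜ, (1 - π k)) :=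
      mul_nonneg (Finset.prod_nonneg fun k _ => hπ0 k)
        (Finset.prod_nonneg fun k _ => by linarith [hπ1 k])
    by_cases hmem : a ∈ T ∧ b ∈ T
    · rw [if_pos hmem, if_pos ⟨a, hmem.1, b, hmem.2, hcl, hdom⟩]
    · rw [if_neg hmem]
      split <;> [exact hw; exact le_refl 0]
  rw [sum_pair_weight n π a b hab] at hsum
  linarith
end

section
/- Let R be a finite set of colored points in ℝ² in general position (no three collinear, distinct coordinates), and let L_R ⊂ ℙ¹ be the set of directions determined by pairs of differently-colored points of R. Then there exists an orthogonal basis B = (b_1, b_2) of ℝ² such that R contains no inter-color dominance with respect to B if and only if L_R = ∅ or there exists a unique l ∈ L_R such that θ(l, l') > π/2 for every l' ∈ L_R with l' ≠ l. -/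
open scoped RealInnerProductSpace

/-- The direction of a planar vector `v` as an angle in `[0, π)`:
parallel (and anti-parallel) vectors get the same angle, so this encodes
the corresponding point of `ℙ¹`. -/
noncomputable def dirAngle (v : EuclideanSpace ℝ (Fin 2)) : ℝ :=
  if Complex.arg (Complex.mk (v 0) (v 1)) < 0 then
    Complex.arg (Complex.mk (v 0) (v 1)) + Real.pi
  else if Complex.arg (Complex.mk (v 0) (v 1)) = Real.pi then 0
  else Complex.arg (Complex.mk (v 0) (v 1))

/-- The counterclockwise angle `θ(l, l') ∈ [0, π)` from direction `l'`
to direction `l` (both given as angles in `[0, π)`). -/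
noncomputable def ccwAngle (l l' : ℝ) : ℝ :=
  if l' ≤ l then l - l' else l - l' + Real.pi

/-- The set of directions determined by differently-colored pairs of `R`. -/
noncomputable def dirSet (R : Finset (EuclideanSpace ℝ (Fin 2)))
    (cl : EuclideanSpace ℝ (Fin 2) → ℕ) : Set ℝ :=
  {m | ∃ a ∈ R, ∃ b ∈ R, cl a ≠ cl b ∧ m = dirAngle (a - b)}

open Real Set

/-! ### Auxiliary machinery -/

/-- Reduction of a real number modulo `π` into `[0, π)`. -/
noncomputable def modPi (x : ℝ) : ℝ := toIcoMod Real.pi_pos 0 x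

lemma modPi_spec (x : ℝ) : ∃ k : ℤ, x = modPi x + k * π := by
  refine ⟨toIcoDiv Real.pi_pos 0 x, ?_⟩
  have := toIcoMod_add_toIcoDiv_zsmul Real.pi_pos 0 x
  rw [zsmul_eq_mul] at this
  rw [modPi]; linarith

lemma modPi_mem (x : ℝ) : modPi x ∈ Set.Ico 0 π := toIcoMod_mem_Ico' Real.pi_pos x

lemma modPi_congr {x y : ℝ} (h : ∃ k : ℤ, x = y + k * π) : modPi x = modPi y := by
  obtain ⟨k, rfl⟩ := h
  have hk : (k : ℝ) * π = k • π := (zsmul_eq_mul π k).symm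
  rw [modPi, modPi, hk, toIcoMod_add_zsmul]

lemma modPi_self {x : ℝ} (h : x ∈ Set.Ico 0 π) : modPi x = x := by
  rw [modPi, toIcoMod_eq_self]; simpa using h

lemma sin_two_modPi (x : ℝ) : Real.sin (2 * modPi x) = Real.sin (2 * x) := by
  obtain ⟨k, hk⟩ := modPi_spec x
  conv_rhs => rw [hk]
  rw [show 2 * (modPi x + k * π) = 2 * modPi x + k * (2 * π) by ring,
    Real.sin_add_int_mul_two_pi]

lemma sin_two_neg_iff {x : ℝ} (hx : x ∈ Set.Ico 0 π) :
    Real.sin (2 * x) < 0 ↔ π / 2 < x := by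
  obtain ⟨hx1, hx2⟩ := hx
  constructor
  · intro h
    by_contra hle
    push_neg at hle
    exact absurd (Real.sin_nonneg_of_nonneg_of_le_pi (by linarith) (by linarith)) (not_le.2 h)
  · intro h
    have h1 : Real.sin (2 * x) = -Real.sin (2 * x - π) := by
      rw [← Real.sin_add_pi]; ring_nf
    have h2 : 0 < Real.sin (2 * x - π) :=
      Real.sin_pos_of_pos_of_lt_pi (by linarith) (by linarith)
    rw [h1]; linarith

lemma ccw_add {l l' : ℝ} (h : l ≠ l') : ccwAngle l l' + ccwAngle l' l = π := by
  rcases le_or_gt l' l with hle | hlt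
  · have hnle : ¬ (l ≤ l') := fun h2 => h (le_antisymm h2 hle)
    rw [ccwAngle, ccwAngle, if_pos hle, if_neg hnle]; ring
  · rw [ccwAngle, ccwAngle, if_neg (not_le.2 hlt), if_pos hlt.le]; ring

lemma ccw_eq_modPi {l l' : ℝ} (hl : l ∈ Set.Ico 0 π) (hl' : l' ∈ Set.Ico 0 π) :
    ccwAngle l l' = modPi (l - l') := by
  obtain ⟨hl1, hl2⟩ := hl; obtain ⟨hl1', hl2'⟩ := hl'
  rcases le_or_gt l' l with hle | hlt
  · rw [ccwAngle, if_pos hle, modPi_self ⟨by linarith, by linarith⟩]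
  · rw [ccwAngle, if_neg (not_le.2 hlt)]
    have h1 : modPi (l - l') = modPi (l - l' + π) :=
      (toIcoMod_add_right Real.pi_pos 0 (l - l')).symm
    rw [h1, modPi_self ⟨by linarith, by linarith⟩]

lemma dirAngle_spec {v : EuclideanSpace ℝ (Fin 2)} (h1 : v 1 ≠ 0) :
    dirAngle v ∈ Set.Ioo 0 π ∧
      ∃ k : ℤ, dirAngle v = Complex.arg (Complex.mk (v 0) (v 1)) + k * π := by
  set z : ℂ := Complex.mk (v 0) (v 1) with hz
  have hne0 : z.arg ≠ 0 := fun h => h1 (Complex.arg_eq_zero_iff.mp h).2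
  have hnepi : z.arg ≠ π := fun h => h1 (Complex.arg_eq_pi_iff.mp h).2
  have hlt : z.arg < π := lt_of_le_of_ne (Complex.arg_le_pi z) hnepi
  have hgt : -π < z.arg := Complex.neg_pi_lt_arg z
  rw [dirAngle, ← hz]
  rcases lt_or_ge z.arg 0 with hneg | hpos
  · rw [if_pos hneg]
    exact ⟨⟨by linarith, by linarith⟩, 1, by push_cast; ring⟩
  · have hpos' : 0 < z.arg := lt_of_le_of_ne hpos (Ne.symm hne0)
    rw [if_neg (not_lt.2 hpos), if_neg hnepi]
    exact ⟨⟨hpos', hlt⟩, 0, by push_cast; ring⟩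

lemma sign_lemma (γ : ℝ) {v : EuclideanSpace ℝ (Fin 2)} (h0 : v 0 ≠ 0) (h1 : v 1 ≠ 0) :
    ((Real.cos γ * v 0 + Real.sin γ * v 1) * (Real.cos γ * v 1 - Real.sin γ * v 0) < 0
      ↔ π / 2 < modPi (dirAngle v - γ)) := by
  set z : ℂ := Complex.mk (v 0) (v 1) with hz
  have hzne : z ≠ 0 := fun h => h0 (by rw [Complex.ext_iff] at h; exact h.1)
  have hr : 0 < ‖z‖ := norm_pos_iff.mpr hzne
  set r : ℝ := ‖z‖ with hrdef
  have hv0 : v 0 = r * Real.cos z.arg := by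
    rw [Complex.cos_arg hzne]; field_simp; exact mul_comm _ _
  have hv1 : v 1 = r * Real.sin z.arg := by
    rw [Complex.sin_arg]; field_simp; exact mul_comm _ _
  set X : ℝ := z.arg - γ with hX
  have hf : Real.cos γ * v 0 + Real.sin γ * v 1 = r * Real.cos X := by
    rw [hv0, hv1, hX, Real.cos_sub]; ring
  have hg : Real.cos γ * v 1 - Real.sin γ * v 0 = r * Real.sin X := by
    rw [hv0, hv1, hX, Real.sin_sub]; ring
  have hprod : (Real.cos γ * v 0 + Real.sin γ * v 1) *
      (Real.cos γ * v 1 - Real.sin γ * v 0) = r ^ 2 * (Real.sin (2 * X) / 2) := by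
    rw [hf, hg, Real.sin_two_mul]; ring
  obtain ⟨_, k, hk⟩ := dirAngle_spec h1
  have hsin : Real.sin (2 * modPi (dirAngle v - γ)) = Real.sin (2 * X) := by
    rw [sin_two_modPi, hk, ← hz,
      show 2 * (z.arg + ↑k * π - γ) = 2 * X + k * (2 * π) by rw [hX]; ring,
      Real.sin_add_int_mul_two_pi]
  rw [hprod, ← hsin, ← sin_two_neg_iff (modPi_mem _)]
  have hr2 : 0 < r ^ 2 := pow_pos hr 2
  constructor
  · intro h; nlinarith
  · intro h
    have hneg : Real.sin (2 * modPi (dirAngle v - γ)) / 2 < 0 := by linarith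
    exact mul_neg_of_pos_of_neg hr2 hneg

lemma inner_two (x y : EuclideanSpace ℝ (Fin 2)) : ⟪x, y⟫ = x 0 * y 0 + x 1 * y 1 := by
  simp [PiLp.inner_apply, Fin.sum_univ_two, RCLike.inner_apply, mul_comm]

lemma euc_sub_apply (x y : EuclideanSpace ℝ (Fin 2)) (i : Fin 2) : (x - y) i = x i - y i := rfl

/-- Helper constructor for planar vectors. -/
noncomputable def mkvec (a b : ℝ) : EuclideanSpace ℝ (Fin 2) := WithLp.toLp 2 ![a, b]

lemma mkvec_zero (a b : ℝ) : mkvec a b 0 = a := rfl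
lemma mkvec_one (a b : ℝ) : mkvec a b 1 = b := rfl

lemma mkvec_ne (a b : ℝ) (h : a ≠ 0 ∨ b ≠ 0) : mkvec a b ≠ 0 := by
  intro h0
  have h0' : ∀ i, mkvec a b i = 0 := fun i => by rw [h0]; rfl
  rcases h with h | h
  · exact h (h0' 0)
  · exact h (h0' 1)

lemma euc_ext {x y : EuclideanSpace ℝ (Fin 2)} (h0 : x 0 = y 0) (h1 : x 1 = y 1) :
    x = y := by
  ext i
  fin_cases i
  · exact h0
  · exact h1

lemma mul_neg_of_signs {A B : ℝ} (h1 : ¬(0 ≤ A ∧ 0 ≤ B)) (h2 : ¬(A ≤ 0 ∧ B ≤ 0)) :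
    A * B < 0 := by
  push_neg at h1 h2
  rcases lt_trichotomy A 0 with h | h | h
  · exact mul_neg_of_neg_of_pos h (h2 h.le)
  · exact absurd (h2 h.le) (not_lt.2 (h1 h.ge).le)
  · exact mul_neg_of_pos_of_neg h (h1 h.le)

/-- Criterion: a finite set `R` of colored planar points in general position
contains no inter-color dominance with respect to some orthogonal basis of
`ℝ²` iff `L_R = ∅` or there is a unique `l ∈ L_R` with `θ(l, l') > π/2` for
every other `l' ∈ L_R`. -/
theorem good_realization_criterion
    (R : Finset (EuclideanSpace ℝ (Fin 2))) (cl : EuclideanSpace ℝ (Fin 2) → ℕ)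
    (hgen : ∀ a ∈ R, ∀ b ∈ R, ∀ c ∈ R, a ≠ b → a ≠ c → b ≠ c →
      ¬ Collinear ℝ ({a, b, c} : Set (EuclideanSpace ℝ (Fin 2))))
    (hcoord : ∀ a ∈ R, ∀ b ∈ R, a ≠ b → a 0 ≠ b 0 ∧ a 1 ≠ b 1) :
    (∃ b₁ b₂ : EuclideanSpace ℝ (Fin 2), b₁ ≠ 0 ∧ b₂ ≠ 0 ∧ ⟪b₁, b₂⟫ = 0 ∧
        ∀ a ∈ R, ∀ b ∈ R, cl a ≠ cl b →
          ¬(⟪b₁, b⟫ ≤ ⟪b₁, a⟫ ∧ ⟪b₂, b⟫ ≤ ⟪b₂, a⟫))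
      ↔ (dirSet R cl = ∅ ∨
          ∃! l : ℝ, l ∈ dirSet R cl ∧
            ∀ l' ∈ dirSet R cl, l' ≠ l → Real.pi / 2 < ccwAngle l l') := by
  -- coordinates of differences are nonzero for inter-color pairs
  have hpairs : ∀ a ∈ R, ∀ b ∈ R, cl a ≠ cl b →
      (a - b) 0 ≠ 0 ∧ (a - b) 1 ≠ 0 := by
    intro a ha b hb hab
    have hne : a ≠ b := fun h => hab (congrArg cl h)
    obtain ⟨h0, h1⟩ := hcoord a ha b hb hne
    exact ⟨sub_ne_zero_of_ne h0, sub_ne_zero_of_ne h1⟩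
  have hmem : ∀ m ∈ dirSet R cl, m ∈ Set.Ioo 0 π := by
    rintro m ⟨a, ha, b, hb, hab, rfl⟩
    exact (dirAngle_spec (hpairs a ha b hb hab).2).1
  have hfin : (dirSet R cl).Finite := by
    apply Set.Finite.subset
      (Set.Finite.image (fun p : _ × _ => dirAngle (p.1 - p.2)) (R ×ˢ R).finite_toSet)
    rintro m ⟨a, ha, b, hb, _, rfl⟩
    exact ⟨(a, b), by simp [ha, hb]⟩
  constructor
  · rintro ⟨b₁, b₂, hb₁, hb₂, horth, hdom⟩
    rcases Set.eq_empty_or_nonempty (dirSet R cl) with he | hne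
    · exact Or.inl he
    right
    -- set up the angle of b₁
    set z₁ : ℂ := Complex.mk (b₁ 0) (b₁ 1) with hz₁
    have hz₁ne : z₁ ≠ 0 := by
      intro h
      rw [Complex.ext_iff] at h
      exact hb₁ (euc_ext h.1 h.2)
    set β : ℝ := z₁.arg with hβ
    set r : ℝ := ‖z₁‖ with hr
    have hrpos : 0 < r := norm_pos_iff.mpr hz₁ne
    have hb10 : b₁ 0 = r * Real.cos β := by
      rw [hβ, Complex.cos_arg hz₁ne]; field_simp; exact mul_comm _ _
    have hb11 : b₁ 1 = r * Real.sin β := by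
      rw [hβ, Complex.sin_arg]; field_simp; exact mul_comm _ _
    set s : ℝ := Real.cos β * b₂ 1 - Real.sin β * b₂ 0 with hs
    have hpy := Real.sin_sq_add_cos_sq β
    have hperp : Real.cos β * b₂ 0 + Real.sin β * b₂ 1 = 0 := by
      rw [inner_two, hb10, hb11] at horth
      have : r * (Real.cos β * b₂ 0 + Real.sin β * b₂ 1) = 0 := by linarith [horth]
      rcases mul_eq_zero.mp this with h | h
      · exact absurd h (ne_of_gt hrpos)
      · exact h
    have hb21 : b₂ 1 = s * Real.cos β := by
      rw [hs]; linear_combination (Real.sin β) * hperp - b₂ 1 * hpy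
    have hb20 : b₂ 0 = -(s * Real.sin β) := by
      rw [hs]; linear_combination (Real.cos β) * hperp - b₂ 0 * hpy
    have hsne : s ≠ 0 := by
      intro h
      refine hb₂ (euc_ext ?_ ?_)
      · show b₂ 0 = (0:ℝ); rw [hb20, h]; ring
      · show b₂ 1 = (0:ℝ); rw [hb21, h]; ring
    -- product of inner products is negative
    have hAB : ∀ a ∈ R, ∀ b ∈ R, cl a ≠ cl b →
        ⟪b₁, a - b⟫ * ⟪b₂, a - b⟫ < 0 := by
      intro a ha b hb hab
      have h1 := hdom a ha b hb hab
      have h2 := hdom b hb a ha (Ne.symm hab)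
      have e1 : ⟪b₁, a - b⟫ = ⟪b₁, a⟫ - ⟪b₁, b⟫ := inner_sub_right _ _ _
      have e2 : ⟪b₂, a - b⟫ = ⟪b₂, a⟫ - ⟪b₂, b⟫ := inner_sub_right _ _ _
      apply mul_neg_of_signs
      · intro hc
        exact h1 ⟨by rw [e1] at hc; linarith [hc.1], by rw [e2] at hc; linarith [hc.2]⟩
      · intro hc
        exact h2 ⟨by rw [e1] at hc; linarith [hc.1], by rw [e2] at hc; linarith [hc.2]⟩
    -- choose γ so that all directions of L_R lie in (γ + π/2, γ + π) mod π
    set γ : ℝ := if 0 < s then β else β - π / 2 with hγ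
    have key : ∀ m ∈ dirSet R cl, π / 2 < modPi (m - γ) := by
      rintro m ⟨a, ha, b, hb, hab, rfl⟩
      obtain ⟨h0, h1⟩ := hpairs a ha b hb hab
      set v := a - b
      have hABv := hAB a ha b hb hab
      have eA : ⟪b₁, v⟫ = r * (Real.cos β * v 0 + Real.sin β * v 1) := by
        rw [inner_two, hb10, hb11]; ring
      have eB : ⟪b₂, v⟫ = s * (Real.cos β * v 1 - Real.sin β * v 0) := by
        rw [inner_two, hb20, hb21]; ring
      rw [eA, eB] at hABv
      rcases lt_or_gt_of_ne hsne with hslt | hsgt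
      · -- s < 0 : product positive, use γ = β - π/2
        have hFG : 0 < (Real.cos β * v 0 + Real.sin β * v 1) *
            (Real.cos β * v 1 - Real.sin β * v 0) := by
          nlinarith [hABv, mul_pos hrpos (neg_pos.mpr hslt)]
        have hγeq : γ = β - π / 2 := by rw [hγ, if_neg (not_lt.2 hslt.le)]
        apply (sign_lemma γ h0 h1).mp
        rw [hγeq, Real.cos_sub_pi_div_two, Real.sin_sub_pi_div_two]
        nlinarith [hFG]
      · -- s > 0 : product negative, use γ = β
        have hFG : (Real.cos β * v 0 + Real.sin β * v 1) *
            (Real.cos β * v 1 - Real.sin β * v 0) < 0 := by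
          nlinarith [hABv, mul_pos hrpos hsgt]
        have hγeq : γ = β := by rw [hγ, if_pos hsgt]
        apply (sign_lemma γ h0 h1).mp
        rw [hγeq]
        exact hFG
    -- take the element with minimal reduced angle
    obtain ⟨lm, hlm, hmin⟩ := Set.exists_min_image (dirSet R cl)
      (fun m => modPi (m - γ)) hfin hne
    have hccw : ∀ l' ∈ dirSet R cl, l' ≠ lm → π / 2 < ccwAngle lm l' := by
      intro l' hl' hne'
      have hu := key lm hlm
      have hu' := key l' hl'
      have hle : modPi (lm - γ) ≤ modPi (l' - γ) := hmin l' hl'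
      set u := modPi (lm - γ)
      set u' := modPi (l' - γ)
      obtain ⟨k, hk⟩ := modPi_spec (lm - γ)
      obtain ⟨k', hk'⟩ := modPi_spec (l' - γ)
      have hcong : modPi (lm - l') = modPi (u - u') := by
        apply modPi_congr
        exact ⟨k - k', by push_cast; linarith⟩
      have hlm_mem := hmem lm hlm
      have hl'_mem := hmem l' hl'
      have hIlm : lm ∈ Set.Ico 0 π := ⟨hlm_mem.1.le, hlm_mem.2⟩
      have hIl' : l' ∈ Set.Ico 0 π := ⟨hl'_mem.1.le, hl'_mem.2⟩
      have hccw_eq : ccwAngle lm l' = modPi (lm - l') := ccw_eq_modPi hIlm hIl'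
      have hccw_eq' : ccwAngle l' lm = modPi (l' - lm) := ccw_eq_modPi hIl' hIlm
      have huu' : u ≠ u' := by
        intro h
        have c1 : modPi (lm - l') = 0 := by
          rw [hcong, h, sub_self]
          exact modPi_self ⟨le_refl 0, Real.pi_pos⟩
        have c2 : modPi (l' - lm) = 0 := by
          have : modPi (l' - lm) = modPi (u' - u) := by
            apply modPi_congr
            exact ⟨k' - k, by push_cast; linarith⟩
          rw [this, h, sub_self]
          exact modPi_self ⟨le_refl 0, Real.pi_pos⟩
        have := ccw_add (Ne.symm hne')
        rw [hccw_eq, hccw_eq', c1, c2] at this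
        exact Real.pi_ne_zero (by linarith)
      have hult : u < u' := lt_of_le_of_ne hle huu'
      have hu'lt : u' < π := (modPi_mem (l' - γ)).2
      have hstep : modPi (u - u') = u - u' + π := by
        have h1 : modPi (u - u') = modPi (u - u' + π) :=
          (toIcoMod_add_right Real.pi_pos 0 (u - u')).symm
        rw [h1, modPi_self ⟨by linarith, by linarith⟩]
      rw [hccw_eq, hcong, hstep]
      linarith
    refine ⟨lm, ⟨hlm, hccw⟩, ?_⟩
    rintro y ⟨hy, hyall⟩
    by_contra hne'
    have h1 := hyall lm hlm (Ne.symm hne')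
    have h2 := hccw y hy hne'
    have h3 := ccw_add (show y ≠ lm from hne')
    linarith
  · rintro (he | ⟨l, ⟨hl, hlall⟩, -⟩)
    · refine ⟨mkvec 1 0, mkvec 0 1, mkvec_ne _ _ (Or.inl one_ne_zero),
        mkvec_ne _ _ (Or.inr one_ne_zero), by rw [inner_two]; simp [mkvec_zero, mkvec_one], ?_⟩
      intro a ha b hb hab _
      have : dirAngle (a - b) ∈ dirSet R cl := ⟨a, ha, b, hb, hab, rfl⟩
      rw [he] at this
      exact this
    · -- all other directions are within π/2 counterclockwise of l
      have hIl : l ∈ Set.Ico 0 π := ⟨(hmem l hl).1.le, (hmem l hl).2⟩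
      have hw : ∀ m ∈ dirSet R cl, modPi (m - l) < π / 2 := by
        intro m hm
        rcases eq_or_ne m l with rfl | hne'
        · rw [sub_self, modPi_self ⟨le_refl 0, Real.pi_pos⟩]
          linarith [Real.pi_pos]
        · have hIm : m ∈ Set.Ico 0 π := ⟨(hmem m hm).1.le, (hmem m hm).2⟩
          have hθ := hlall m hm hne'
          have hccw_eq : ccwAngle l m = modPi (l - m) := ccw_eq_modPi hIl hIm
          rw [hccw_eq] at hθ
          have hup : modPi (l - m) < π := (modPi_mem (l - m)).2
          obtain ⟨k, hk⟩ := modPi_spec (l - m)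
          have hcong : modPi (m - l) = modPi (-(modPi (l - m)) + π) := by
            apply modPi_congr
            exact ⟨-k - 1, by push_cast; linarith⟩
          rw [hcong, modPi_self ⟨by linarith, by linarith⟩]
          linarith
      obtain ⟨m₀, hm₀, hmax⟩ := Set.exists_max_image (dirSet R cl)
        (fun m => modPi (m - l)) hfin ⟨l, hl⟩
      set Mx := modPi (m₀ - l) with hMx
      have hMxlt : Mx < π / 2 := hw m₀ hm₀
      have hMx0 : 0 ≤ Mx := (modPi_mem (m₀ - l)).1
      set δ : ℝ := (π / 2 - Mx) / 2 with hδ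
      have hδpos : 0 < δ := by rw [hδ]; linarith
      set γ : ℝ := l + π / 2 - δ with hγ
      have key : ∀ m ∈ dirSet R cl, π / 2 < modPi (m - γ) := by
        intro m hm
        have hwm : modPi (m - l) ≤ Mx := hmax m hm
        have hwm0 : 0 ≤ modPi (m - l) := (modPi_mem (m - l)).1
        obtain ⟨k, hk⟩ := modPi_spec (m - l)
        set t : ℝ := modPi (m - l) + δ + π / 2 with ht
        have hcong : modPi (m - γ) = modPi t := by
          apply modPi_congr
          exact ⟨k - 1, by push_cast; rw [ht, hγ]; linarith⟩
        have htmem : t ∈ Set.Ico 0 π := by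
          constructor
          · rw [ht]; linarith
          · rw [ht, hδ]; linarith
        rw [hcong, modPi_self htmem, ht]
        linarith
      refine ⟨mkvec (Real.cos γ) (Real.sin γ), mkvec (-Real.sin γ) (Real.cos γ), ?_, ?_, ?_, ?_⟩
      · apply mkvec_ne
        rcases eq_or_ne (Real.cos γ) 0 with h | h
        · right; intro hs; nlinarith [Real.sin_sq_add_cos_sq γ]
        · left; exact h
      · apply mkvec_ne
        rcases eq_or_ne (Real.cos γ) 0 with h | h
        · left; intro hs; nlinarith [Real.sin_sq_add_cos_sq γ]
        · right; exact h
      · rw [inner_two, mkvec_zero, mkvec_one, mkvec_zero, mkvec_one]; ring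
      · intro a ha b hb hab hc
        obtain ⟨h0, h1⟩ := hpairs a ha b hb hab
        have hmd : dirAngle (a - b) ∈ dirSet R cl := ⟨a, ha, b, hb, hab, rfl⟩
        have hFG := (sign_lemma γ h0 h1).mpr (key _ hmd)
        have e1 : ⟪mkvec (Real.cos γ) (Real.sin γ), a - b⟫ =
            Real.cos γ * (a - b) 0 + Real.sin γ * (a - b) 1 := by
          rw [inner_two, mkvec_zero, mkvec_one]
        have e2 : ⟪mkvec (-Real.sin γ) (Real.cos γ), a - b⟫ =
            Real.cos γ * (a - b) 1 - Real.sin γ * (a - b) 0 := by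
          rw [inner_two, mkvec_zero, mkvec_one]; ring
        have f1 : (0:ℝ) ≤ Real.cos γ * (a - b) 0 + Real.sin γ * (a - b) 1 := by
          rw [← e1, inner_sub_right]; linarith [hc.1]
        have f2 : (0:ℝ) ≤ Real.cos γ * (a - b) 1 - Real.sin γ * (a - b) 0 := by
          rw [← e2, inner_sub_right]; linarith [hc.2]
        nlinarith
end

section
/- Let x = [r_1 : ⋯ : r_d] ∈ ℙ^{d−1} have nonnegative homogeneous coordinates with Σ r_i² = 1, let ε ∈ (0, π/2], and define y = [r_1 + ε/√d : ⋯ : r_d + ε/√d]. Then ang(x, y) < ε. -/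
open scoped RealInnerProductSpace

/-- `ε/√(1+ε²) < sin ε` for `ε ∈ (0, π/2]`. -/
lemma aux_sin_lower (ε : ℝ) (h : 0 < ε) (h2 : ε ≤ Real.pi / 2) :
    ε / Real.sqrt (1 + ε ^ 2) < Real.sin ε := by
  have harc : (0:ℝ) < Real.arctan ε := by simpa using Real.arctan_strictMono h
  have h3 : Real.arctan ε < ε := by
    have := Real.lt_tan harc (Real.arctan_lt_pi_div_two ε)
    rwa [Real.tan_arctan] at this
  have := Real.sin_lt_sin_of_lt_of_le_pi_div_two (x := Real.arctan ε)
    (by linarith) h2 h3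
  rwa [Real.sin_arctan] at this

/-- The cosine of the angle between representatives is scale invariant. -/
lemma aux_ratio {d : ℕ} (v w : EuclideanSpace ℝ (Fin d)) (hv : v ≠ 0) (hw : w ≠ 0) :
    |⟪(Projectivization.mk ℝ v hv).rep, (Projectivization.mk ℝ w hw).rep⟫| /
      (‖(Projectivization.mk ℝ v hv).rep‖ * ‖(Projectivization.mk ℝ w hw).rep‖)
    = |⟪v, w⟫| / (‖v‖ * ‖w‖) := by
  obtain ⟨a, ha⟩ := Projectivization.exists_smul_eq_mk_rep ℝ v hv
  obtain ⟨b, hb⟩ := Projectivization.exists_smul_eq_mk_rep ℝ w hw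
  rw [← ha, ← hb]
  have ha0 : (a:ℝ) ≠ 0 := a.ne_zero
  have hb0 : (b:ℝ) ≠ 0 := b.ne_zero
  rw [Units.smul_def, Units.smul_def, real_inner_smul_left, real_inner_smul_right,
    norm_smul, norm_smul, abs_mul, abs_mul]
  simp only [Real.norm_eq_abs]
  have hv' : (0:ℝ) < ‖v‖ := norm_pos_iff.mpr hv
  have hw' : (0:ℝ) < ‖w‖ := norm_pos_iff.mpr hw
  have ha' : (0:ℝ) < |(a:ℝ)| := abs_pos.2 ha0
  have hb' : (0:ℝ) < |(b:ℝ)| := abs_pos.2 hb0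
  rw [div_eq_div_iff (ne_of_gt (mul_pos (mul_pos ha' hv') (mul_pos hb' hw')))
    (ne_of_gt (mul_pos hv' hw'))]
  ring

set_option maxHeartbeats 1000000 in
/-- Perturbation lemma: if `x ∈ ℙ^{d−1}` is represented by a unit vector `r`
with nonnegative coordinates, `ε ∈ (0, π/2]`, and `y` is represented by the
vector with coordinates `r i + ε/√d`, then `ang x y < ε`. -/
theorem ang_perturbation_lt
    {d : ℕ} (ε : ℝ) (hε0 : 0 < ε) (hε : ε ≤ Real.pi / 2)
    (r r' : EuclideanSpace ℝ (Fin d))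
    (hr : ‖r‖ = 1) (hrnn : ∀ i, 0 ≤ r i)
    (hr' : ∀ i, r' i = r i + ε / Real.sqrt d)
    (hr0 : r ≠ 0) (hr'0 : r' ≠ 0) :
    ang (Projectivization.mk ℝ r hr0) (Projectivization.mk ℝ r' hr'0) < ε := by
  have hd : 0 < d := by
    rcases Nat.eq_zero_or_pos d with h | h
    · exact absurd (by subst h; ext i; exact i.elim0) hr0
    · exact h
  have hdR : (0:ℝ) < d := by exact_mod_cast hd
  obtain ⟨c, hc_def⟩ : ∃ c : ℝ, c = ε / Real.sqrt d := ⟨_, rfl⟩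
  have hr'c : ∀ i, r' i = r i + c := fun i => by rw [hr' i, hc_def]
  have hsqd : (0:ℝ) < Real.sqrt d := Real.sqrt_pos.2 hdR
  have hc : 0 < c := by rw [hc_def]; exact div_pos hε0 hsqd
  have hc2 : (d:ℝ) * c ^ 2 = ε ^ 2 := by
    rw [hc_def, div_pow, Real.sq_sqrt hdR.le]
    field_simp
  -- sum of squares is 1
  have hsum2 : ∑ i, r i ^ 2 = 1 := by
    have := hr
    rw [EuclideanSpace.norm_eq] at this
    have h1 : ∑ i, r i ^ 2 = 1 := by
      have := Real.sqrt_eq_one.mp (by simpa [sq_abs, sq] using this)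
      simpa [sq] using this
    exact h1
  obtain ⟨γ, hγ_def⟩ : ∃ g : ℝ, g = ∑ i, r i := ⟨_, rfl⟩
  have hγ1 : 1 ≤ γ := by
    rw [← hsum2, hγ_def]
    refine Finset.sum_le_sum fun i _ => ?_
    have hle : r i ^ 2 ≤ 1 := by
      rw [← hsum2]
      exact Finset.single_le_sum (fun j _ => sq_nonneg (r j)) (Finset.mem_univ i)
    nlinarith [hrnn i]
  -- inner product and norm computations
  have hinner : ⟪r, r'⟫ = 1 + c * γ := by
    simp only [PiLp.inner_apply, RCLike.inner_apply, starRingEnd_apply, star_trivial]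
    rw [hγ_def]
    rw [Finset.sum_congr rfl fun i _ => by rw [hr'c i]]
    simp only [add_mul]
    rw [Finset.sum_add_distrib, ← Finset.mul_sum]
    have : ∑ i, r i * r i = 1 := by simpa [sq] using hsum2
    rw [this]
  have hnorm' : ‖r'‖ ^ 2 = 1 + 2 * c * γ + ε ^ 2 := by
    have h1 : ‖r'‖ ^ 2 = ∑ i, (r i + c) ^ 2 := by
      rw [EuclideanSpace.norm_eq, Real.sq_sqrt (by positivity)]
      exact Finset.sum_congr rfl fun i _ => by rw [hr'c i, Real.norm_eq_abs, sq_abs]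
    have h2 : ∑ i, (r i + c) ^ 2 = ∑ i, (r i ^ 2 + 2 * c * r i + c ^ 2) :=
      Finset.sum_congr rfl fun i _ => by ring
    rw [h1, h2, Finset.sum_add_distrib, Finset.sum_add_distrib, hsum2,
      ← Finset.mul_sum, ← hγ_def]
    simp only [Finset.sum_const, Finset.card_univ, Fintype.card_fin, nsmul_eq_mul]
    linarith [hc2]
  have hS : (0:ℝ) < 1 + 2 * c * γ + ε ^ 2 := by positivity
  have hnorm'' : ‖r'‖ = Real.sqrt (1 + 2 * c * γ + ε ^ 2) := by
    rw [← hnorm']; exact (Real.sqrt_sq (norm_nonneg _)).symm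
  -- the key inequality
  have hcos : Real.cos ε < (1 + c * γ) / Real.sqrt (1 + 2 * c * γ + ε ^ 2) := by
    have hsin := aux_sin_lower ε hε0 hε
    have hcosnn : 0 ≤ Real.cos ε :=
      Real.cos_nonneg_of_mem_Icc ⟨by linarith [Real.pi_pos], hε⟩
    have hsq : Real.sqrt (1 + 2 * c * γ + ε ^ 2) > 0 := Real.sqrt_pos.2 hS
    rw [lt_div_iff₀ hsq]
    -- compare squares
    have hlhs_nn : 0 ≤ Real.cos ε * Real.sqrt (1 + 2 * c * γ + ε ^ 2) := by positivity
    have hrhs_pos : 0 < 1 + c * γ := by nlinarith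
    have hsq2 : (Real.cos ε * Real.sqrt (1 + 2 * c * γ + ε ^ 2)) ^ 2 < (1 + c * γ) ^ 2 := by
      rw [mul_pow, Real.sq_sqrt hS.le]
      have hcos2 : Real.cos ε ^ 2 = 1 - Real.sin ε ^ 2 := by
        have := Real.sin_sq_add_cos_sq ε; linarith
      have h1ε : (0:ℝ) < 1 + ε ^ 2 := by positivity
      have hs1 : ε ^ 2 / (1 + ε ^ 2) < Real.sin ε ^ 2 := by
        have hεnn : 0 ≤ ε / Real.sqrt (1 + ε ^ 2) := by positivity
        have h4 : (ε / Real.sqrt (1 + ε ^ 2)) ^ 2 = ε ^ 2 / (1 + ε ^ 2) := by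
          rw [div_pow, Real.sq_sqrt h1ε.le]
        rw [← h4]
        nlinarith [hsin, hεnn]
      have hcos2lt : Real.cos ε ^ 2 < 1 / (1 + ε ^ 2) := by
        rw [hcos2]
        have : 1 - 1 / (1 + ε ^ 2) = ε ^ 2 / (1 + ε ^ 2) := by field_simp; ring
        linarith
      -- cos²ε * S < S/(1+ε²) ≤ (1+cγ)²
      have hstep : (1 + 2 * c * γ + ε ^ 2) / (1 + ε ^ 2) ≤ (1 + c * γ) ^ 2 := by
        rw [div_le_iff₀ h1ε]
        have hγ0 : (0:ℝ) < γ := lt_of_lt_of_le one_pos hγ1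
        nlinarith [mul_pos hc hγ0, sq_nonneg (c * γ), sq_nonneg ε,
          mul_nonneg (mul_nonneg hc.le hγ0.le) (sq_nonneg ε)]
      calc Real.cos ε ^ 2 * (1 + 2 * c * γ + ε ^ 2)
          < (1 / (1 + ε ^ 2)) * (1 + 2 * c * γ + ε ^ 2) := by
            exact mul_lt_mul_of_pos_right hcos2lt hS
        _ = (1 + 2 * c * γ + ε ^ 2) / (1 + ε ^ 2) := by ring
        _ ≤ (1 + c * γ) ^ 2 := hstep
    exact lt_of_pow_lt_pow_left₀ 2 hrhs_pos.le hsq2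
  -- conclude
  rw [ang, aux_ratio r r' hr0 hr'0, hr, hinner, hnorm'']
  have habs : |1 + c * γ| = 1 + c * γ := abs_of_pos (by nlinarith)
  rw [one_mul, habs]
  obtain ⟨t, ht_def⟩ : ∃ t : ℝ, t = (1 + c * γ) / Real.sqrt (1 + 2 * c * γ + ε ^ 2) := ⟨_, rfl⟩
  rw [← ht_def]
  rw [← ht_def] at hcos
  have ht1 : t ≤ 1 := by
    have h5 := abs_real_inner_div_norm_mul_norm_le_one r r'
    rw [hr, hinner, hnorm'', one_mul, ← ht_def] at h5
    exact (abs_le.mp h5).2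
  have ht0 : (0:ℝ) ≤ t := by
    rw [ht_def]
    exact div_nonneg (by nlinarith) (Real.sqrt_nonneg _)
  have hcos1 : Real.cos ε ∈ Set.Icc (-1:ℝ) 1 := ⟨Real.neg_one_le_cos ε, Real.cos_le_one ε⟩
  have ht : t ∈ Set.Icc (-1:ℝ) 1 := ⟨by linarith, ht1⟩
  have := Real.strictAntiOn_arccos hcos1 ht hcos
  rwa [Real.arccos_cos hε0.le (by linarith [Real.pi_pos])] at this
end

section
/- Let r' ∈ ℝ^d be a vector with all entries strictly positive, and let s ∈ ℝ^d be a unit vector having at least one strictly positive and at least one strictly negative entry. Then (Σ_i r'_i s_i)² ≤ Σ_i (r'_i)² − η², where η = min(|r'_p|, |r'_q|) for some indices p, q with s_p > 0 and s_q < 0. Consequently sin²(ang(z, y)) ≥ η² / ‖r'‖² where y, z ∈ ℙ^{d−1} are the projective points of r' and s. -/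
open scoped RealInnerProductSpace

open Finset in
lemma key_ineq {d : ℕ} (r s : EuclideanSpace ℝ (Fin d))
    (hpos : ∀ i, 0 < r i) (hs : ∑ i, s i ^ 2 = 1) {p q : Fin d}
    (hp : 0 < s p) (hq : s q < 0) :
    (∑ i, r i * s i) ^ 2 ≤ (∑ i, r i ^ 2) - (min |r p| |r q|) ^ 2 := by
  classical
  set P : Finset (Fin d) := univ.filter (fun i => 0 < s i) with hP
  set A := ∑ i ∈ P, r i * s i with hA
  set B := ∑ i ∈ univ.filter (fun i => ¬ 0 < s i), -(r i * s i) with hB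
  have hsplit : ∑ i, r i * s i = A - B := by
    rw [hA, hB, Finset.sum_neg_distrib, sub_neg_eq_add,
      Finset.sum_filter_add_sum_filter_not]
  have hA0 : 0 ≤ A := Finset.sum_nonneg fun i hi => by
    have h2 := (mem_filter.1 hi).2
    nlinarith [hpos i]
  have hB0 : 0 ≤ B := Finset.sum_nonneg fun i hi => by
    have h2 : s i ≤ 0 := not_lt.1 (mem_filter.1 hi).2
    nlinarith [(hpos i)]
  have hsq : ∀ (T : Finset (Fin d)), ∑ i ∈ T, s i ^ 2 ≤ 1 := fun T => by
    rw [← hs]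
    exact Finset.sum_le_sum_of_subset_of_nonneg (subset_univ T)
      (fun i _ _ => sq_nonneg _)
  have hrq : ∀ (T : Finset (Fin d)) (j : Fin d), j ∉ T →
      ∑ i ∈ T, r i ^ 2 ≤ (∑ i, r i ^ 2) - r j ^ 2 := by
    intro T j hj
    have h1 : T ⊆ univ.erase j := fun i hi =>
      mem_erase.2 ⟨fun h => hj (h ▸ hi), mem_univ i⟩
    calc ∑ i ∈ T, r i ^ 2 ≤ ∑ i ∈ univ.erase j, r i ^ 2 :=
          Finset.sum_le_sum_of_subset_of_nonneg h1 (fun i _ _ => sq_nonneg _)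
      _ = (∑ i, r i ^ 2) - r j ^ 2 := Finset.sum_erase_eq_sub (mem_univ j)
  have hACS : A ^ 2 ≤ (∑ i, r i ^ 2) - r q ^ 2 := by
    have h1 := Finset.sum_mul_sq_le_sq_mul_sq P r s
    have h2 := hsq P
    have h3 := hrq P q (by simp [hP, hq.not_gt, not_lt.2 hq.le])
    have h4 : (0:ℝ) ≤ ∑ i ∈ P, r i ^ 2 := Finset.sum_nonneg fun i _ => sq_nonneg _
    nlinarith
  have hBCS : B ^ 2 ≤ (∑ i, r i ^ 2) - r p ^ 2 := by
    have h1 := Finset.sum_mul_sq_le_sq_mul_sq (univ.filter (fun i => ¬ 0 < s i)) r (fun i => -s i)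
    have h2 : B = ∑ i ∈ univ.filter (fun i => ¬ 0 < s i), r i * (-s i) := by
      rw [hB]; congr 1; ext i; ring
    have h3 : ∑ i ∈ univ.filter (fun i => ¬ 0 < s i), (-s i) ^ 2 ≤ 1 := by
      simpa using hsq (univ.filter (fun i => ¬ 0 < s i))
    have h4 := hrq (univ.filter (fun i => ¬ 0 < s i)) p (by simp [hp])
    have h5 : (0:ℝ) ≤ ∑ i ∈ univ.filter (fun i => ¬ 0 < s i), r i ^ 2 :=
      Finset.sum_nonneg fun i _ => sq_nonneg _
    rw [h2]
    nlinarith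
  have hmp : (min |r p| |r q|) ^ 2 ≤ r p ^ 2 := by
    have h1 : min |r p| |r q| ≤ |r p| := min_le_left _ _
    have h2 : 0 ≤ min |r p| |r q| := le_min (abs_nonneg _) (abs_nonneg _)
    nlinarith [sq_abs (r p)]
  have hmq : (min |r p| |r q|) ^ 2 ≤ r q ^ 2 := by
    have h1 : min |r p| |r q| ≤ |r q| := min_le_right _ _
    have h2 : 0 ≤ min |r p| |r q| := le_min (abs_nonneg _) (abs_nonneg _)
    nlinarith [sq_abs (r q)]
  rw [hsplit]
  rcases le_total B A with h | h
  · nlinarith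
  · nlinarith

/-- Cancellation lemma: for `r'` with strictly positive entries and a unit
vector `s` having a positive and a negative entry, there are indices `p, q`
with `s p > 0 > s q` such that `(Σ r'ᵢ sᵢ)² ≤ Σ (r'ᵢ)² − η²` where
`η = min (|r' p|) (|r' q|)`; consequently `sin²(ang(z, y)) ≥ η²/‖r'‖²`
for the projective points `z`, `y` of `s`, `r'`. -/
theorem cancellation_lemma
    {d : ℕ} (r' s : EuclideanSpace ℝ (Fin d))
    (hpos : ∀ i, 0 < r' i) (hs : ‖s‖ = 1)
    (hsp : ∃ p, 0 < s p) (hsq : ∃ q, s q < 0)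
    (hr0 : r' ≠ 0) (hs0 : s ≠ 0) :
    ∃ p q : Fin d, 0 < s p ∧ s q < 0 ∧
      (∑ i, r' i * s i) ^ 2 ≤ (∑ i, (r' i) ^ 2) - (min |r' p| |r' q|) ^ 2 ∧
      (min |r' p| |r' q|) ^ 2 / ‖r'‖ ^ 2 ≤
        (Real.sin (ang (Projectivization.mk ℝ s hs0)
          (Projectivization.mk ℝ r' hr0))) ^ 2 := by
  obtain ⟨p, hp⟩ := hsp
  obtain ⟨q, hq⟩ := hsq
  have hs2 : ∑ i, s i ^ 2 = 1 := by
    have h1 : ⟪s, s⟫ = ‖s‖ ^ 2 := real_inner_self_eq_norm_sq s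
    rw [hs] at h1
    simp only [PiLp.inner_apply, RCLike.inner_apply, conj_trivial] at h1
    simpa [sq] using h1
  have hr2 : ∑ i, r' i ^ 2 = ‖r'‖ ^ 2 := by
    have h1 : ⟪r', r'⟫ = ‖r'‖ ^ 2 := real_inner_self_eq_norm_sq r'
    rw [← h1]
    simp only [PiLp.inner_apply, RCLike.inner_apply, conj_trivial]
    simp [sq]
  have hkey := key_ineq r' s hpos hs2 hp hq
  refine ⟨p, q, hp, hq, hkey, ?_⟩
  set η := min |r' p| |r' q| with hη
  have hrnorm : 0 < ‖r'‖ := norm_pos_iff.2 hr0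
  have hinner : ⟪s, r'⟫ = ∑ i, r' i * s i := by
    simp [PiLp.inner_apply, RCLike.inner_apply, conj_trivial, mul_comm]
  -- compute ang
  obtain ⟨a, ha⟩ := Projectivization.exists_smul_eq_mk_rep ℝ s hs0
  obtain ⟨b, hb⟩ := Projectivization.exists_smul_eq_mk_rep ℝ r' hr0
  have ha0 : |(a : ℝ)| ≠ 0 := abs_ne_zero.2 a.ne_zero
  have hb0 : |(b : ℝ)| ≠ 0 := abs_ne_zero.2 b.ne_zero
  have hang : ang (Projectivization.mk ℝ s hs0) (Projectivization.mk ℝ r' hr0)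
      = Real.arccos (|⟪s, r'⟫| / ‖r'‖) := by
    rw [ang, ← ha, ← hb]
    rw [Units.smul_def, Units.smul_def, real_inner_smul_left, real_inner_smul_right,
      norm_smul, norm_smul, Real.norm_eq_abs, Real.norm_eq_abs, abs_mul, abs_mul, hs]
    congr 1
    field_simp
  set x := |⟪s, r'⟫| / ‖r'‖ with hx
  have hx0 : 0 ≤ x := div_nonneg (abs_nonneg _) hrnorm.le
  have hx1 : x ≤ 1 := by
    rw [hx, div_le_one hrnorm]
    calc |⟪s, r'⟫| ≤ ‖s‖ * ‖r'‖ := abs_real_inner_le_norm s r'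
      _ = ‖r'‖ := by rw [hs, one_mul]
  have h1x : 0 ≤ 1 - x ^ 2 := by nlinarith
  rw [hang, Real.sin_arccos, Real.sq_sqrt h1x]
  rw [hx, div_pow, sq_abs, hinner]
  rw [le_sub_iff_add_le, ← add_div, div_le_one (by positivity)]
  rw [← hr2]
  linarith [hkey]
end
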